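/- arXiv:2110.08311 — 4 statements merged into one kernel-verified Lean document; each statement's English description precedes it below -/
import Mathlib

section
/- Let X be a locally Nachbin ordered space, ∗ ∈ X, and O an open neighbourhood of ∗. Then the locally ordered space X_O (final topology of q_O, ordered basis of the posets (U_{α,A}, ≤_{α,A})) is a locally Nachbin ordered space if, and only if, the open set O is closed in X. -/
universe u v w v'

/-! ## Ordered bases and locally ordered spaces -/

/-- An *ordered subset* of `X`: a pair of a carrier set and a relation on `X`
(intended to be a partial order on the carrier). -/
structure OSet (X : Type u) : Type u where
  carrier : Set X
  le : X → X → Prop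

namespace OSet

variable {X : Type u} {Y : Type v}

/-- `B` is a partially ordered subset: the relation only relates elements of the
carrier, is reflexive on the carrier, antisymmetric and transitive. -/
def IsPoset (B : OSet X) : Prop :=
  (∀ p q, B.le p q → p ∈ B.carrier ∧ q ∈ B.carrier) ∧
  (∀ p ∈ B.carrier, B.le p p) ∧
  (∀ p q, B.le p q → B.le q p → p = q) ∧
  (∀ p q r, B.le p q → B.le q r → B.le p r)

/-- `B ⊆_lax B'`. -/
def laxSub (B B' : OSet X) : Prop :=
  B.carrier ⊆ B'.carrier ∧ ∀ p q, B.le p q → B'.le p q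

/-- `B ⊆_str B'` : the carrier is included and `≤_B` is the restriction of `≤_{B'}`
to the carrier of `B`. -/
def strSub (B B' : OSet X) : Prop :=
  B.carrier ⊆ B'.carrier ∧ ∀ p ∈ B.carrier, ∀ q ∈ B.carrier, (B.le p q ↔ B'.le p q)

/-- Product of two ordered subsets, with the product order. -/
def prod (B : OSet X) (B' : OSet Y) : OSet (X × Y) where
  carrier := B.carrier ×ˢ B'.carrier
  le p q := B.le p.1 q.1 ∧ B'.le p.2 q.2

/-- The restriction of an ordered subset to a subset `S` (of its carrier). -/
def restrict (B : OSet X) (S : Set X) : OSet X where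
  carrier := S
  le p q := B.le p q ∧ p ∈ S ∧ q ∈ S

/-- `B` is a Nachbin ordered (sub)space: its order is closed in the product of the
subspace `B.carrier` (with the topology inherited from `X`) with itself. -/
def IsNachbin [TopologicalSpace X] (B : OSet X) : Prop :=
  IsClosed {p : B.carrier × B.carrier | B.le p.1 p.2}

end OSet

/-- `𝔅` is an *ordered basis* on the topological space `X`. -/
structure IsOrderedBasis {X : Type u} [TopologicalSpace X] (𝔅 : Set (OSet X)) : Prop where
  isPoset : ∀ B ∈ 𝔅, B.IsPoset
  isBasis : TopologicalSpace.IsTopologicalBasis (OSet.carrier '' 𝔅)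
  compat : ∀ x : X, ∀ B ∈ 𝔅, ∀ B' ∈ 𝔅, x ∈ B.carrier → x ∈ B'.carrier →
    ∃ B'' ∈ 𝔅, x ∈ B''.carrier ∧ B''.carrier ⊆ B.carrier ∩ B'.carrier ∧
      ∀ p q, B''.le p q → B.le p q ∧ B'.le p q

/-- `𝔅` is a *strict* ordered basis: the interpolating element `B''` can be chosen
with `B'' ⊆_str B` and `B'' ⊆_str B'`. -/
def IsStrictOrderedBasis {X : Type u} [TopologicalSpace X] (𝔅 : Set (OSet X)) : Prop :=
  IsOrderedBasis 𝔅 ∧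
    ∀ x : X, ∀ B ∈ 𝔅, ∀ B' ∈ 𝔅, x ∈ B.carrier → x ∈ B'.carrier →
      ∃ B'' ∈ 𝔅, x ∈ B''.carrier ∧ B''.strSub B ∧ B''.strSub B'

/-- `𝔅'` is coarser than `𝔅`. -/
def CoarserThan {X : Type u} (𝔅' 𝔅 : Set (OSet X)) : Prop :=
  ∀ x : X, ∀ B' ∈ 𝔅', x ∈ B'.carrier → ∃ B ∈ 𝔅, x ∈ B.carrier ∧ B.laxSub B'

/-- `𝔅'` is strictly coarser than `𝔅` (`⊆_lax` replaced by `⊆_str`). -/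
def StrictCoarserThan {X : Type u} (𝔅' 𝔅 : Set (OSet X)) : Prop :=
  ∀ x : X, ∀ B' ∈ 𝔅', x ∈ B'.carrier → ∃ B ∈ 𝔅, x ∈ B.carrier ∧ B.strSub B'

/-- Two ordered bases are equivalent when each is coarser than the other. -/
def EquivBases {X : Type u} (𝔅 𝔅' : Set (OSet X)) : Prop :=
  CoarserThan 𝔅' 𝔅 ∧ CoarserThan 𝔅 𝔅'

/-- Strict equivalence of ordered bases. -/
def StrictEquivBases {X : Type u} (𝔅 𝔅' : Set (OSet X)) : Prop :=
  StrictCoarserThan 𝔅' 𝔅 ∧ StrictCoarserThan 𝔅 𝔅'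

/-- The *open posets* `Ō(𝔅)` determined by an ordered basis `𝔅`. -/
def openPosets {X : Type u} (𝔅 : Set (OSet X)) : Set (OSet X) :=
  {A | ∀ x ∈ A.carrier, ∃ B ∈ 𝔅, x ∈ B.carrier ∧ B.laxSub A}

/-- `f` is locally increasing at `x`, w.r.t. the ordered bases `𝔅` (source) and
`𝔅'` (target). -/
def LocIncrAt {X : Type u} {Y : Type v} (𝔅 : Set (OSet X)) (𝔅' : Set (OSet Y))
    (f : X → Y) (x : X) : Prop :=
  ∀ B' ∈ 𝔅', f x ∈ B'.carrier →
    ∃ B ∈ 𝔅, x ∈ B.carrier ∧ (∀ p ∈ B.carrier, f p ∈ B'.carrier) ∧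
      ∀ p q, B.le p q → B'.le (f p) (f q)

/-- `f` is locally increasing. -/
def LocIncr {X : Type u} {Y : Type v} (𝔅 : Set (OSet X)) (𝔅' : Set (OSet Y))
    (f : X → Y) : Prop :=
  ∀ x : X, LocIncrAt 𝔅 𝔅' f x

/-- The locally ordered space given by the basis `𝔅` is locally Nachbin. -/
def IsLocallyNachbin {X : Type u} [TopologicalSpace X] (𝔅 : Set (OSet X)) : Prop :=
  ∀ x : X, ∀ O ∈ openPosets 𝔅, x ∈ O.carrier →
    ∃ O' ∈ openPosets 𝔅, x ∈ O'.carrier ∧ O'.laxSub O ∧ O'.IsNachbin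

/-- The product ordered basis on `X × Y`. -/
def prodBasis {X : Type u} {Y : Type v} (𝔅 : Set (OSet X)) (𝔅' : Set (OSet Y)) :
    Set (OSet (X × Y)) :=
  {C | ∃ B ∈ 𝔅, ∃ B' ∈ 𝔅', C = B.prod B'}

/-- A topological space viewed as a locally ordered space: all its open subsets,
each ordered by equality. -/
def trivBasis (T : Type v) [TopologicalSpace T] : Set (OSet T) :=
  {B | ∃ U : Set T, IsOpen U ∧ B = ⟨U, fun p q => p = q ∧ p ∈ U⟩}

/-! ## The directed circle -/

/-- The proper open arc `{e^{ix} : a < x < b}` of the unit circle, with its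
standard partial order. -/
def arcOSet (a b : ℝ) : OSet Circle where
  carrier := Circle.exp '' Set.Ioo a b
  le p q := ∃ x ∈ Set.Ioo a b, ∃ y ∈ Set.Ioo a b, x ≤ y ∧ Circle.exp x = p ∧ Circle.exp y = q

/-- The strict ordered basis of the directed circle `S⃗¹`: all proper open arcs
with their standard orders. -/
def dCircleBasis : Set (OSet Circle) :=
  {B | ∃ a b : ℝ, 0 < b - a ∧ b - a < 2 * Real.pi ∧ B = arcOSet a b}

/-- `K(f) = {t | ∀ s s', f (s,t) = f (s',t)}`. -/
def Kset {X : Type u} {Y : Type v} (f : Circle × X → Y) : Set X :=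
  {t | ∀ s s' : Circle, f (s, t) = f (s', t)}

/-! ## The space `X_O` -/

/-- The underlying set of `X_O := O ⊔ (S¹ × (X ∖ O))`. -/
def XO (X : Type u) (O : Set X) : Type u := ↥O ⊕ (Circle × ↥(Oᶜ))

open Classical in
/-- The map `q_O : S¹ × X → X_O`. -/
noncomputable def qO {X : Type u} (O : Set X) : Circle × X → XO X O := fun p =>
  if h : p.2 ∈ O then Sum.inl ⟨p.2, h⟩ else Sum.inr (p.1, ⟨p.2, h⟩)

/-- `X_O` carries the final topology of `q_O`. -/
noncomputable instance XO.topology {X : Type u} [TopologicalSpace X] (O : Set X) :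
    TopologicalSpace (XO X O) :=
  TopologicalSpace.coinduced (qO O) inferInstance

/-- The subset `U_{α,A}` of `X_O` (for `αc` a set of points of the circle and
`A` a subset of `X`). -/
def USet {X : Type u} (O : Set X) (αc : Set Circle) (A : Set X) : Set (XO X O) :=
  Sum.inl '' {t : ↥O | (t : X) ∈ A} ∪
    Sum.inr '' {p : Circle × ↥(Oᶜ) | p.1 ∈ αc ∧ (p.2 : X) ∈ A}

/-- The second component of an element of `X_O`. -/
def XO.p2 {X : Type u} {O : Set X} : XO X O → X :=
  Sum.elim (fun t => (t : X)) (fun p => (p.2 : X))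

/-- The relation `≤¹_{α,A}` on `X_O`: the image under `q_O` of the product order
on `α × A`. -/
def leOne {X : Type u} (O : Set X) (α : OSet Circle) (A : OSet X) (u u' : XO X O) : Prop :=
  ∃ x x' : Circle × X, α.le x.1 x'.1 ∧ A.le x.2 x'.2 ∧ qO O x = u ∧ qO O x' = u'

/-- The relation `⊑` on `X_O`. -/
def sqsub {X : Type u} (O : Set X) (α : OSet Circle) (A : OSet X) (u u' : XO X O) : Prop :=
  A.le (XO.p2 u) (XO.p2 u') ∧
    ((∃ t : ↥O, u = Sum.inl t) ∨ (∃ t : ↥O, u' = Sum.inl t) ∨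
      ∃ (s s' : Circle) (t t' : ↥(Oᶜ)),
        u = Sum.inr (s, t) ∧ u' = Sum.inr (s', t') ∧ α.le s s')

/-- The poset `(U_{α,A}, ≤_{α,A})`, where `≤_{α,A}` is the transitive closure of
`≤¹_{α,A}`. -/
def UOSet {X : Type u} (O : Set X) (α : OSet Circle) (A : OSet X) : OSet (XO X O) where
  carrier := USet O α.carrier A.carrier
  le := Relation.TransGen (leOne O α A)

/-- The ordered basis of `X_O`: the posets `(U_{α,A}, ≤_{α,A})` for `α` a proper
open arc and `A` an open poset of `X`. -/
def XOBasis {X : Type u} (𝔅 : Set (OSet X)) (O : Set X) : Set (OSet (XO X O)) :=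
  {C | ∃ a b : ℝ, 0 < b - a ∧ b - a < 2 * Real.pi ∧
    ∃ A ∈ openPosets 𝔅, C = UOSet O (arcOSet a b) A}


open Set Topology

section Aux

variable {X : Type u}

theorem qO_mem {O : Set X} {s : Circle} {t : X} (h : t ∈ O) :
    qO O (s, t) = Sum.inl ⟨t, h⟩ := dif_pos h

theorem qO_not_mem {O : Set X} {s : Circle} {t : X} (h : t ∉ O) :
    qO O (s, t) = Sum.inr (s, ⟨t, h⟩) := dif_neg h

theorem p2_qO {O : Set X} (p : Circle × X) : XO.p2 (qO O p) = p.2 := by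
  by_cases h : p.2 ∈ O
  · rw [show qO O p = qO O (p.1, p.2) from rfl, qO_mem h]; rfl
  · rw [show qO O p = qO O (p.1, p.2) from rfl, qO_not_mem h]; rfl

theorem p2_inl {O : Set X} (w : ↥O) : XO.p2 (Sum.inl w : XO X O) = (w : X) := rfl

theorem p2_inr {O : Set X} (p : Circle × ↥(Oᶜ)) : XO.p2 (Sum.inr p : XO X O) = (p.2 : X) := rfl

theorem continuous_qO [TopologicalSpace X] (O : Set X) : Continuous (qO O) :=
  continuous_coinduced_rng

theorem continuous_p2 [TopologicalSpace X] {O : Set X} :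
    Continuous (XO.p2 : XO X O → X) := by
  refine continuous_coinduced_dom.mpr ?_
  exact continuous_snd.congr fun p => (p2_qO p).symm

theorem mem_USet_inl {O : Set X} {αc : Set Circle} {A : Set X} {w : ↥O} :
    (Sum.inl w : XO X O) ∈ USet O αc A ↔ (w : X) ∈ A := by
  constructor
  · rintro (⟨v, hv, hvw⟩ | ⟨pp, _, hpp⟩)
    · cases Sum.inl.inj hvw; exact hv
    · exact absurd hpp (by simp)
  · intro h; exact Or.inl ⟨w, h, rfl⟩

theorem mem_USet_inr {O : Set X} {αc : Set Circle} {A : Set X} {p : Circle × ↥(Oᶜ)} :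
    (Sum.inr p : XO X O) ∈ USet O αc A ↔ p.1 ∈ αc ∧ (p.2 : X) ∈ A := by
  constructor
  · rintro (⟨v, _, hvw⟩ | ⟨pp, hpp, heq⟩)
    · exact absurd hvw (by simp)
    · cases Sum.inr.inj heq; exact hpp
  · intro h; exact Or.inr ⟨p, h, rfl⟩

theorem USet_mono {O : Set X} {αc : Set Circle} {A A' : Set X} (h : A ⊆ A') :
    USet O αc A ⊆ USet O αc A' := by
  rintro u (⟨w, hw, rfl⟩ | ⟨pp, hpp, rfl⟩)
  · exact Or.inl ⟨w, h hw, rfl⟩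
  · exact Or.inr ⟨pp, ⟨hpp.1, h hpp.2⟩, rfl⟩

theorem preimage_USet {O : Set X} (αc : Set Circle) (A : Set X) :
    qO O ⁻¹' USet O αc A = ((univ : Set Circle) ×ˢ (O ∩ A)) ∪ (αc ×ˢ A) := by
  ext ⟨s, t⟩
  by_cases h : t ∈ O
  · rw [mem_preimage, show ((s,t) : Circle × X) = (s, t) from rfl, qO_mem h]; refine mem_USet_inl.trans ?_
    simp only [mem_union, mem_prod, mem_univ, mem_inter_iff, true_and]
    tauto
  · rw [mem_preimage, qO_not_mem h]; refine mem_USet_inr.trans ?_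
    simp only [mem_union, mem_prod, mem_univ, mem_inter_iff, true_and]
    tauto

theorem isOpen_USet [TopologicalSpace X] {O : Set X} (hO : IsOpen O) {αc : Set Circle}
    {A : Set X} (hαc : IsOpen αc) (hA : IsOpen A) : IsOpen (USet O αc A) := by
  rw [show (XO.topology O : TopologicalSpace (XO X O)) = TopologicalSpace.coinduced (qO O) inferInstance from rfl,
    isOpen_coinduced, preimage_USet]
  exact (isOpen_univ.prod (hO.inter hA)).union (hαc.prod hA)

end Aux

section Arc

open Real

theorem circle_exp_continuous : Continuous (Circle.exp : ℝ → Circle) := Circle.exp.continuous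

theorem circle_exp_isOpenMap : IsOpenMap (Circle.exp : ℝ → Circle) :=
  isLocalHomeomorph_circleExp.isOpenMap

theorem arc_inj {a b : ℝ} (h2 : b - a < 2 * π) {θ θ' : ℝ} (hθ : θ ∈ Ioo a b)
    (hθ' : θ' ∈ Ioo a b) (h : Circle.exp θ = Circle.exp θ') : θ = θ' := by
  obtain ⟨m, hm⟩ := Circle.exp_eq_exp.mp h
  have hπ := Real.two_pi_pos
  obtain ⟨hθ1, hθ2⟩ := hθ
  obtain ⟨hθ'1, hθ'2⟩ := hθ'
  have hd : θ - θ' = m * (2 * π) := by linarith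
  have hm0 : m = 0 := by
    by_contra hm0
    rcases lt_or_gt_of_ne hm0 with h' | h'
    · have : (m : ℝ) ≤ -1 := by exact_mod_cast Int.le_sub_one_iff.mpr h'
      nlinarith
    · have : (1 : ℝ) ≤ (m : ℝ) := by exact_mod_cast h'
      nlinarith
  rw [hm0] at hd; push_cast at hd; linarith

theorem arc_le_mem {a b : ℝ} {p q : Circle} (h : (arcOSet a b).le p q) :
    p ∈ (arcOSet a b).carrier ∧ q ∈ (arcOSet a b).carrier := by
  obtain ⟨x, hx, y, hy, _, hxp, hyq⟩ := h
  exact ⟨⟨x, hx, hxp⟩, ⟨y, hy, hyq⟩⟩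

theorem arc_le_refl {a b : ℝ} {p : Circle} (h : p ∈ (arcOSet a b).carrier) :
    (arcOSet a b).le p p := by
  obtain ⟨x, hx, hxp⟩ := h
  exact ⟨x, hx, x, hx, le_refl x, hxp, hxp⟩

theorem arc_le_trans {a b : ℝ} (h2 : b - a < 2 * π) {p q r : Circle}
    (hpq : (arcOSet a b).le p q) (hqr : (arcOSet a b).le q r) : (arcOSet a b).le p r := by
  obtain ⟨x, hx, y, hy, hxy, hxp, hyq⟩ := hpq
  obtain ⟨x', hx', y', hy', hxy', hxq, hyr⟩ := hqr
  have : y = x' := arc_inj h2 hy hx' (hyq.trans hxq.symm)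
  exact ⟨x, hx, y', hy', by linarith, hxp, hyr⟩

theorem arc_le_antisymm {a b : ℝ} (h2 : b - a < 2 * π) {p q : Circle}
    (hpq : (arcOSet a b).le p q) (hqp : (arcOSet a b).le q p) : p = q := by
  obtain ⟨x, hx, y, hy, hxy, hxp, hyq⟩ := hpq
  obtain ⟨x', hx', y', hy', hxy', hxq, hyp⟩ := hqp
  have h1 : y = x' := arc_inj h2 hy hx' (hyq.trans hxq.symm)
  have h3 : y' = x := arc_inj h2 hy' hx (hyp.trans hxp.symm)
  have : x = y := by linarith
  rw [← hxp, ← hyq, this]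

theorem arc_mid_mem {a b : ℝ} (h1 : 0 < b - a) :
    Circle.exp ((a + b) / 2) ∈ (arcOSet a b).carrier :=
  ⟨(a + b) / 2, ⟨by linarith, by linarith⟩, rfl⟩

theorem arc_carrier_isOpen {a b : ℝ} : IsOpen (arcOSet a b).carrier :=
  circle_exp_isOpenMap _ isOpen_Ioo

end Arc

section ArcClosed

open Real

variable {a b : ℝ}

noncomputable def arcInv (a b : ℝ) (u : ↥((arcOSet a b).carrier)) : ℝ := u.2.choose

theorem arcInv_spec (u : ↥((arcOSet a b).carrier)) :
    arcInv a b u ∈ Ioo a b ∧ Circle.exp (arcInv a b u) = (u : Circle) :=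
  u.2.choose_spec

theorem arcInv_exp (h2 : b - a < 2 * π) {θ : ℝ} (hθ : θ ∈ Ioo a b)
    (u : ↥((arcOSet a b).carrier)) (h : Circle.exp θ = (u : Circle)) : arcInv a b u = θ :=
  arc_inj h2 (arcInv_spec u).1 hθ ((arcInv_spec u).2.trans h.symm)

theorem continuous_arcInv (h2 : b - a < 2 * π) : Continuous (arcInv a b) := by
  rw [continuous_iff_continuousAt]
  intro u
  rw [ContinuousAt, Metric.tendsto_nhds]
  intro ε hε
  have hu := arcInv_spec u
  set θ := arcInv a b u
  have hopen : IsOpen (Subtype.val ⁻¹' (Circle.exp '' (Ioo a b ∩ Ioo (θ - ε) (θ + ε))) :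
      Set ↥((arcOSet a b).carrier)) :=
    (circle_exp_isOpenMap _ (isOpen_Ioo.inter isOpen_Ioo)).preimage continuous_subtype_val
  have humem : u ∈ Subtype.val ⁻¹' (Circle.exp '' (Ioo a b ∩ Ioo (θ - ε) (θ + ε))) := by
    exact ⟨θ, ⟨hu.1, ⟨by linarith, by linarith⟩⟩, hu.2⟩
  filter_upwards [hopen.mem_nhds humem] with v hv
  obtain ⟨θ', ⟨hθ'1, hθ'2⟩, hθ'⟩ := hv
  rw [arcInv_exp h2 hθ'1 v hθ']
  rw [Real.dist_eq, abs_lt]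
  constructor <;> [skip; skip] <;> cases hθ'2 <;> linarith

theorem arc_le_iff_arcInv (h2 : b - a < 2 * π) (u v : ↥((arcOSet a b).carrier)) :
    (arcOSet a b).le u v ↔ arcInv a b u ≤ arcInv a b v := by
  constructor
  · rintro ⟨x, hx, y, hy, hxy, hxp, hyq⟩
    rw [arcInv_exp h2 hx u hxp, arcInv_exp h2 hy v hyq]; exact hxy
  · intro h
    exact ⟨_, (arcInv_spec u).1, _, (arcInv_spec v).1, h, (arcInv_spec u).2, (arcInv_spec v).2⟩

theorem arc_isClosed (h2 : b - a < 2 * π) :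
    IsClosed {p : ↥((arcOSet a b).carrier) × ↥((arcOSet a b).carrier) |
      (arcOSet a b).le p.1 p.2} := by
  have : {p : ↥((arcOSet a b).carrier) × ↥((arcOSet a b).carrier) | (arcOSet a b).le p.1 p.2}
      = (fun p : ↥((arcOSet a b).carrier) × ↥((arcOSet a b).carrier) =>
          (arcInv a b p.1, arcInv a b p.2)) ⁻¹' {q : ℝ × ℝ | q.1 ≤ q.2} := by
    ext ⟨u, v⟩
    exact arc_le_iff_arcInv h2 u v
  rw [this]
  exact (isClosed_le continuous_fst continuous_snd).preimage
    (((continuous_arcInv h2).comp continuous_fst).prodMk ((continuous_arcInv h2).comp continuous_snd))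

end ArcClosed

section Fc

variable {X : Type u}

/-- The circle component of an element of `X_O` (junk value `1` on `inl`). -/
noncomputable def Fc {O : Set X} : XO X O → Circle := Sum.elim (fun _ => 1) (fun p => p.1)

theorem Fc_inr {O : Set X} (p : Circle × ↥(Oᶜ)) : Fc (Sum.inr p : XO X O) = p.1 := rfl

open Classical in
theorem continuous_Fc [TopologicalSpace X] {O : Set X} (hO : IsOpen O) (hcl : IsClosed O) :
    Continuous (Fc : XO X O → Circle) := by
  refine continuous_coinduced_dom.mpr ?_
  have heq : (Fc ∘ qO O) = fun p : Circle × X => if p.2 ∈ O then (1 : Circle) else p.1 := by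
    funext p
    by_cases h : p.2 ∈ O
    · simp only [Function.comp_apply, if_pos h,
        show qO O p = qO O (p.1, p.2) from rfl, qO_mem h]; rfl
    · simp only [Function.comp_apply, if_neg h,
        show qO O p = qO O (p.1, p.2) from rfl, qO_not_mem h]; rfl
  rw [heq]
  refine Continuous.if ?_ continuous_const continuous_fst
  intro p hp
  exfalso
  have hclopen : IsClopen {p : Circle × X | p.2 ∈ O} :=
    ⟨hcl.preimage continuous_snd, hO.preimage continuous_snd⟩
  rw [hclopen.frontier_eq] at hp
  exact hp

end Fc

section Posets

variable {X : Type u} [TopologicalSpace X]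

omit [TopologicalSpace X] in
theorem mem_openPosets_of_mem {𝔅 : Set (OSet X)} {B : OSet X} (hB : B ∈ 𝔅) :
    B ∈ openPosets 𝔅 :=
  fun _ hx => ⟨B, hB, hx, subset_rfl, fun _ _ h => h⟩

theorem openPosets_carrier_isOpen {𝔅 : Set (OSet X)} (h𝔅 : IsOrderedBasis 𝔅)
    {A : OSet X} (hA : A ∈ openPosets 𝔅) : IsOpen A.carrier := by
  rw [isOpen_iff_forall_mem_open]
  intro x hx
  obtain ⟨B, hB, hxB, hsub⟩ := hA x hx
  exact ⟨B.carrier, hsub.1, h𝔅.isBasis.isOpen ⟨B, hB, rfl⟩, hxB⟩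

theorem openPosets_le_refl {𝔅 : Set (OSet X)} (h𝔅 : IsOrderedBasis 𝔅)
    {A : OSet X} (hA : A ∈ openPosets 𝔅) {x : X} (hx : x ∈ A.carrier) : A.le x x := by
  obtain ⟨B, hB, hxB, hsub⟩ := hA x hx
  exact hsub.2 _ _ ((h𝔅.isPoset B hB).2.1 x hxB)

theorem basis_refine {𝔅 : Set (OSet X)} (h𝔅 : IsOrderedBasis 𝔅) {B : OSet X}
    (hB : B ∈ 𝔅) {x : X} {V : Set X} (hV : IsOpen V) (hx : x ∈ B.carrier) (hxV : x ∈ V) :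
    ∃ B' ∈ 𝔅, x ∈ B'.carrier ∧ B'.carrier ⊆ V ∧ B'.carrier ⊆ B.carrier ∧
      ∀ p q, B'.le p q → B.le p q := by
  obtain ⟨c, hc, hxc, hcsub⟩ := h𝔅.isBasis.exists_subset_of_mem_open
    (⟨hx, hxV⟩ : x ∈ B.carrier ∩ V) ((h𝔅.isBasis.isOpen ⟨B, hB, rfl⟩).inter hV)
  obtain ⟨B₁, hB₁, rfl⟩ := hc
  obtain ⟨B'', hB'', hx'', hsub'', hle''⟩ := h𝔅.compat x B hB B₁ hB₁ hx hxc
  refine ⟨B'', hB'', hx'', fun y hy => (hcsub (hsub'' hy).2).2,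
    fun y hy => (hsub'' hy).1, fun p q h => (hle'' p q h).1⟩

/-- Shrinking an open poset to a Nachbin open poset inside an open set `V`. -/
theorem nachbin_shrink {𝔅 : Set (OSet X)} (h𝔅 : IsOrderedBasis 𝔅)
    (hN : IsLocallyNachbin 𝔅) {A : OSet X} (hA : A ∈ openPosets 𝔅) {τ : X}
    (hτ : τ ∈ A.carrier) {V : Set X} (hV : IsOpen V) (hτV : τ ∈ V) :
    ∃ A₃ ∈ openPosets 𝔅, τ ∈ A₃.carrier ∧ A₃.carrier ⊆ V ∧ A₃.carrier ⊆ A.carrier ∧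
      (∀ p q, A₃.le p q → Relation.TransGen A.le p q ∧ p ∈ A₃.carrier ∧ q ∈ A₃.carrier) ∧
      A₃.IsNachbin := by
  set Ahat : OSet X := ⟨A.carrier, Relation.TransGen A.le⟩ with hAhat
  have hAhatMem : Ahat ∈ openPosets 𝔅 := by
    intro x hx
    obtain ⟨B, hB, hxB, hsub⟩ := hA x hx
    exact ⟨B, hB, hxB, hsub.1, fun p q h => Relation.TransGen.single (hsub.2 p q h)⟩
  obtain ⟨A'', hA'', hτ'', hlax'', hNach''⟩ := hN τ Ahat hAhatMem hτ
  set S : Set X := A''.carrier ∩ V with hS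
  refine ⟨A''.restrict S, ?_, ⟨hτ'', hτV⟩, fun y hy => hy.2,
    fun y hy => hlax''.1 hy.1, ?_, ?_⟩
  · -- open poset
    intro x hx
    obtain ⟨B, hB, hxB, hsub⟩ := hA'' x hx.1
    obtain ⟨B', hB', hxB', hB'V, hB'B, hB'le⟩ := basis_refine h𝔅 hB hV hxB hx.2
    refine ⟨B', hB', hxB', fun y hy => ⟨hsub.1 (hB'B hy), hB'V hy⟩, ?_⟩
    intro p q h
    have hpq := (h𝔅.isPoset B' hB').1 p q h
    exact ⟨hsub.2 p q (hB'le p q h), ⟨hsub.1 (hB'B hpq.1), hB'V hpq.1⟩,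
      ⟨hsub.1 (hB'B hpq.2), hB'V hpq.2⟩⟩
  · rintro p q ⟨h, hp, hq⟩
    exact ⟨hlax''.2 p q h, hp, hq⟩
  · -- Nachbin
    have hsub : S ⊆ A''.carrier := fun y hy => hy.1
    have : {p : ↥S × ↥S | (A''.restrict S).le (p.1 : X) (p.2 : X)} =
        (fun p : ↥S × ↥S => ((Set.inclusion hsub p.1, Set.inclusion hsub p.2) :
          ↥A''.carrier × ↥A''.carrier)) ⁻¹'
          {p : ↥A''.carrier × ↥A''.carrier | A''.le (p.1 : X) (p.2 : X)} := by
      ext ⟨u, v⟩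
      simp only [Set.mem_preimage, Set.mem_setOf_eq, Set.inclusion]
      constructor
      · rintro ⟨h, _, _⟩; exact h
      · intro h; exact ⟨h, u.2, v.2⟩
    have hcl : IsClosed {p : ↥S × ↥S | (A''.restrict S).le (p.1 : X) (p.2 : X)} :=
      this ▸ hNach''.preimage
        (((continuous_inclusion hsub).comp continuous_fst).prodMk
          ((continuous_inclusion hsub).comp continuous_snd))
    exact hcl

end Posets

section Chains

variable {X : Type u}

/-- Lifting a transitive chain in `X` to a chain in `X_O`. -/
theorem lift0 {O : Set X} {α : OSet Circle} {A : OSet X}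
    (hαl : ∀ s s', α.le s s' → α.le s s) {τ τ' : X}
    (h : Relation.TransGen A.le τ τ') :
    ∀ σ σ', α.le σ σ' →
      Relation.TransGen (leOne O α A) (qO O (σ, τ)) (qO O (σ', τ')) := by
  induction h using Relation.TransGen.head_induction_on with
  | single h => exact fun σ σ' hσ => Relation.TransGen.single ⟨(σ, _), (σ', _), hσ, h, rfl, rfl⟩
  | @head c τ₂ h _ IH =>
    exact fun σ σ' hσ =>
      Relation.TransGen.head ⟨(σ, c), (σ, τ₂), hαl _ _ hσ, h, rfl, rfl⟩ (IH σ σ' hσ)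

/-- Collapsing a chain all of whose points lie outside `O`. -/
theorem collapse_out {O : Set X} {α : OSet Circle} {B : OSet X} (hB : B.IsPoset)
    (hBO : ∀ t ∈ B.carrier, t ∉ O)
    (hαt : ∀ s₁ s₂ s₃, α.le s₁ s₂ → α.le s₂ s₃ → α.le s₁ s₃)
    {u v : XO X O} (h : Relation.TransGen (leOne O α B) u v) :
    ∃ (σ : Circle) (tu : ↥(Oᶜ)) (σ' : Circle) (tv : ↥(Oᶜ)),
      u = Sum.inr (σ, tu) ∧ v = Sum.inr (σ', tv) ∧ α.le σ σ' ∧ B.le (tu : X) (tv : X) := by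
  induction h with
  | single h =>
    obtain ⟨x, x', hα, hBle, h1, h2⟩ := h
    have hx := (hB.1 _ _ hBle).1
    have hx' := (hB.1 _ _ hBle).2
    rw [show qO O x = qO O (x.1, x.2) from rfl, qO_not_mem (hBO _ hx)] at h1
    rw [show qO O x' = qO O (x'.1, x'.2) from rfl, qO_not_mem (hBO _ hx')] at h2
    exact ⟨x.1, ⟨x.2, hBO _ hx⟩, x'.1, ⟨x'.2, hBO _ hx'⟩, h1.symm, h2.symm, hα, hBle⟩
  | tail _ h IH =>
    obtain ⟨σ, tu, σ', tv, hu, hb, hα, hBle⟩ := IH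
    obtain ⟨x, x', hα', hBle', h1, h2⟩ := h
    have hx := (hB.1 _ _ hBle').1
    have hx' := (hB.1 _ _ hBle').2
    rw [show qO O x = qO O (x.1, x.2) from rfl, qO_not_mem (hBO _ hx)] at h1
    rw [show qO O x' = qO O (x'.1, x'.2) from rfl, qO_not_mem (hBO _ hx')] at h2
    rw [hb] at h1
    obtain ⟨hσ, ht⟩ := Prod.mk.inj (Sum.inr.inj h1)
    refine ⟨σ, tu, x'.1, ⟨x'.2, hBO _ hx'⟩, hu, h2.symm, hαt _ _ _ hα ?_, hB.2.2.2 _ _ _ hBle ?_⟩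
    · rw [← hσ]; exact hα'
    · have hh : (tv : X) = x.2 := by rw [← ht]
      rw [← hh] at hBle'; exact hBle'

/-- Collapsing a chain all of whose points lie inside `O`. -/
theorem collapse_in {O : Set X} {α : OSet Circle} {B : OSet X} (hB : B.IsPoset)
    (hBO : ∀ t ∈ B.carrier, t ∈ O)
    {u v : XO X O} (h : Relation.TransGen (leOne O α B) u v) :
    ∃ (tu tv : ↥O), u = Sum.inl tu ∧ v = Sum.inl tv ∧ B.le (tu : X) (tv : X) := by
  induction h with
  | single h =>
    obtain ⟨x, x', hα, hBle, h1, h2⟩ := h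
    have hx := (hB.1 _ _ hBle).1
    have hx' := (hB.1 _ _ hBle).2
    rw [show qO O x = qO O (x.1, x.2) from rfl, qO_mem (hBO _ hx)] at h1
    rw [show qO O x' = qO O (x'.1, x'.2) from rfl, qO_mem (hBO _ hx')] at h2
    exact ⟨⟨x.2, hBO _ hx⟩, ⟨x'.2, hBO _ hx'⟩, h1.symm, h2.symm, hBle⟩
  | tail _ h IH =>
    obtain ⟨tu, tv, hu, hb, hBle⟩ := IH
    obtain ⟨x, x', hα, hBle', h1, h2⟩ := h
    have hx := (hB.1 _ _ hBle').1
    have hx' := (hB.1 _ _ hBle').2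
    rw [show qO O x = qO O (x.1, x.2) from rfl, qO_mem (hBO _ hx)] at h1
    rw [show qO O x' = qO O (x'.1, x'.2) from rfl, qO_mem (hBO _ hx')] at h2
    rw [hb] at h1
    have ht : (tv : X) = x.2 := by
      have := Sum.inl.inj h1; rw [← this]
    refine ⟨tu, ⟨x'.2, hBO _ hx'⟩, hu, h2.symm, hB.2.2.2 _ _ _ hBle ?_⟩
    rw [ht]; exact hBle'

end Chains

section Fwd

variable {X : Type u}

/-- Key invariant used for antisymmetry in the forward direction. -/
theorem collapse_fwd {O : Set X} {α : OSet Circle} {B : OSet X} (hB : B.IsPoset)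
    (hαt : ∀ s₁ s₂ s₃, α.le s₁ s₂ → α.le s₂ s₃ → α.le s₁ s₃)
    {u v : XO X O} (h : Relation.TransGen (leOne O α B) u v) :
    B.le (XO.p2 u) (XO.p2 v) ∧ (XO.p2 v = XO.p2 u → XO.p2 u ∉ O →
      ∃ (σ : Circle) (tu : ↥(Oᶜ)) (σ' : Circle) (tv : ↥(Oᶜ)),
        u = Sum.inr (σ, tu) ∧ v = Sum.inr (σ', tv) ∧ α.le σ σ') := by
  induction h with
  | @single w h =>
    obtain ⟨x, x', hα, hBle, h1, h2⟩ := h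
    have hp2u : XO.p2 u = x.2 := by rw [← h1]; exact p2_qO x
    have hp2v : XO.p2 w = x'.2 := by rw [← h2]; exact p2_qO x'
    refine ⟨by rw [hp2u, hp2v]; exact hBle, ?_⟩
    intro heq hnO
    rw [hp2u] at hnO
    have hnO' : x'.2 ∉ O := by rw [← hp2v, heq, hp2u]; exact hnO
    rw [show qO O x = qO O (x.1, x.2) from rfl, qO_not_mem hnO] at h1
    rw [show qO O x' = qO O (x'.1, x'.2) from rfl, qO_not_mem hnO'] at h2
    exact ⟨x.1, ⟨x.2, hnO⟩, x'.1, ⟨x'.2, hnO'⟩, h1.symm, h2.symm, hα⟩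
  | @tail bmid cend htg h IH =>
    obtain ⟨x, x', hα, hBle, h1, h2⟩ := h
    have hp2b : XO.p2 bmid = x.2 := by rw [← h1]; exact p2_qO x
    have hp2c : XO.p2 cend = x'.2 := by rw [← h2]; exact p2_qO x'
    have hle1 : B.le (XO.p2 u) (XO.p2 cend) := by
      refine hB.2.2.2 _ _ _ IH.1 ?_
      rw [hp2b, hp2c]; exact hBle
    refine ⟨hle1, ?_⟩
    intro heq hnO
    -- p2 bmid = p2 u by antisymmetry
    have hb1 : B.le (XO.p2 u) (XO.p2 bmid) := IH.1
    have hb2 : B.le (XO.p2 bmid) (XO.p2 u) := by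
      rw [← heq]; rw [hp2b, hp2c]; exact hBle
    have hbeq : XO.p2 bmid = XO.p2 u := hB.2.2.1 _ _ hb2 hb1
    obtain ⟨σ, tu, σ', tv, hu, hbm, hσ⟩ := IH.2 hbeq hnO
    have hx2 : x.2 ∉ O := by rw [← hp2b, hbeq]; exact hnO
    have hx'2 : x'.2 ∉ O := by rw [← hp2c, heq]; exact hnO
    rw [show qO O x = qO O (x.1, x.2) from rfl, qO_not_mem hx2] at h1
    rw [show qO O x' = qO O (x'.1, x'.2) from rfl, qO_not_mem hx'2] at h2
    rw [hbm] at h1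
    obtain ⟨hσeq, _⟩ := Prod.mk.inj (Sum.inr.inj h1)
    refine ⟨σ, tu, x'.1, ⟨x'.2, hx'2⟩, hu, h2.symm, hαt _ _ _ hσ ?_⟩
    rw [← hσeq]; exact hα

end Fwd

section Rev

variable {X : Type u}

/-- The order used in the `inl` case of the reverse direction. -/
def Rinl (O : Set X) (A₃ : OSet X) (u v : XO X O) : Prop :=
  A₃.le (XO.p2 u) (XO.p2 v) ∧ (∃ w : ↥O, u = Sum.inl w) ∧ (∃ w : ↥O, v = Sum.inl w)

/-- The order used in the `inr` case of the reverse direction. -/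
def Rinr (O : Set X) (α : OSet Circle) (A₃ : OSet X) (u v : XO X O) : Prop :=
  A₃.le (XO.p2 u) (XO.p2 v) ∧ ∃ (σ : Circle) (tu : ↥(Oᶜ)) (σ' : Circle) (tv : ↥(Oᶜ)),
    u = Sum.inr (σ, tu) ∧ v = Sum.inr (σ', tv) ∧ α.le σ σ'

theorem mem_USet_p2 {O : Set X} {αc : Set Circle} {A : Set X} {u : XO X O}
    (hu : u ∈ USet O αc A) : XO.p2 u ∈ A := by
  rcases hu with ⟨w, hw, rfl⟩ | ⟨pp, hpp, rfl⟩
  · exact hw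
  · exact hpp.2

theorem mem_USet_inr_form {O : Set X} {αc : Set Circle} {A : Set X} {u : XO X O}
    (hsub : A ⊆ Oᶜ) (hu : u ∈ USet O αc A) :
    ∃ pp : Circle × ↥(Oᶜ), u = Sum.inr pp ∧ pp.1 ∈ αc ∧ (pp.2 : X) ∈ A := by
  rcases hu with ⟨w, hw, rfl⟩ | ⟨pp, hpp, rfl⟩
  · exact absurd w.2 (hsub hw)
  · exact ⟨pp, rfl, hpp⟩

theorem mem_USet_inl_form {O : Set X} {αc : Set Circle} {A : Set X} {u : XO X O}
    (hsub : A ⊆ O) (hu : u ∈ USet O αc A) :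
    ∃ w : ↥O, u = Sum.inl w ∧ (w : X) ∈ A := by
  rcases hu with ⟨w, hw, rfl⟩ | ⟨pp, hpp, rfl⟩
  · exact ⟨w, rfl, hw⟩
  · exact absurd (hsub hpp.2) pp.2.2

theorem nachbin_inl [TopologicalSpace X] {O : Set X} (αc : Set Circle) {A₃ : OSet X}
    (hsub : A₃.carrier ⊆ O) (hN : A₃.IsNachbin) :
    OSet.IsNachbin (⟨USet O αc A₃.carrier, Rinl O A₃⟩ : OSet (XO X O)) := by
  unfold OSet.IsNachbin
  set C : Set (XO X O) := USet O αc A₃.carrier with hC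
  have hmem : ∀ u : ↥C, XO.p2 (u : XO X O) ∈ A₃.carrier := fun u => mem_USet_p2 u.2
  set f : ↥C → ↥A₃.carrier := fun u => ⟨XO.p2 (u : XO X O), hmem u⟩ with hf
  have hfc : Continuous f := (continuous_p2.comp continuous_subtype_val).subtype_mk _
  have hEq : {p : ↥C × ↥C | Rinl O A₃ (p.1 : XO X O) (p.2 : XO X O)} =
      (fun p : ↥C × ↥C => (f p.1, f p.2)) ⁻¹'
        {p : ↥A₃.carrier × ↥A₃.carrier | A₃.le (p.1 : X) (p.2 : X)} := by
    ext ⟨u, v⟩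
    simp only [Set.mem_preimage, Set.mem_setOf_eq]
    constructor
    · rintro ⟨h, -, -⟩; exact h
    · intro h
      obtain ⟨wu, hwu, -⟩ := mem_USet_inl_form hsub u.2
      obtain ⟨wv, hwv, -⟩ := mem_USet_inl_form hsub v.2
      exact ⟨h, ⟨wu, hwu⟩, ⟨wv, hwv⟩⟩
  exact hEq ▸ hN.preimage ((hfc.comp continuous_fst).prodMk (hfc.comp continuous_snd))

theorem nachbin_inr [TopologicalSpace X] {O : Set X} (hO : IsOpen O) (hcl : IsClosed O)
    {a b : ℝ} (h2 : b - a < 2 * Real.pi) {A₃ : OSet X}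
    (hsub : A₃.carrier ⊆ Oᶜ) (hN : A₃.IsNachbin) :
    OSet.IsNachbin (⟨USet O (arcOSet a b).carrier A₃.carrier,
      Rinr O (arcOSet a b) A₃⟩ : OSet (XO X O)) := by
  unfold OSet.IsNachbin
  set C : Set (XO X O) := USet O (arcOSet a b).carrier A₃.carrier with hC
  have hmem : ∀ u : ↥C, XO.p2 (u : XO X O) ∈ A₃.carrier := fun u => mem_USet_p2 u.2
  have hmemF : ∀ u : ↥C, Fc (u : XO X O) ∈ (arcOSet a b).carrier := by
    intro u
    obtain ⟨pp, hpp, h1, -⟩ := mem_USet_inr_form hsub u.2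
    rw [hpp, Fc_inr]; exact h1
  set f : ↥C → ↥A₃.carrier := fun u => ⟨XO.p2 (u : XO X O), hmem u⟩ with hf
  set g : ↥C → ↥(arcOSet a b).carrier := fun u => ⟨Fc (u : XO X O), hmemF u⟩ with hg
  have hfc : Continuous f := (continuous_p2.comp continuous_subtype_val).subtype_mk _
  have hgc : Continuous g :=
    (((continuous_Fc hO hcl)).comp continuous_subtype_val).subtype_mk _
  have hEq : {p : ↥C × ↥C | Rinr O (arcOSet a b) A₃ (p.1 : XO X O) (p.2 : XO X O)} =
      ((fun p : ↥C × ↥C => (f p.1, f p.2)) ⁻¹'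
        {p : ↥A₃.carrier × ↥A₃.carrier | A₃.le (p.1 : X) (p.2 : X)}) ∩
      ((fun p : ↥C × ↥C => (g p.1, g p.2)) ⁻¹'
        {p : ↥(arcOSet a b).carrier × ↥(arcOSet a b).carrier |
          (arcOSet a b).le (p.1 : Circle) (p.2 : Circle)}) := by
    ext ⟨u, v⟩
    simp only [Set.mem_inter_iff, Set.mem_preimage, Set.mem_setOf_eq]
    constructor
    · rintro ⟨h, σ, tu, σ', tv, hu, hv, hσ⟩
      refine ⟨h, ?_⟩
      have hgu : Fc (u : XO X O) = σ := by rw [hu, Fc_inr]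
      have hgv : Fc (v : XO X O) = σ' := by rw [hv, Fc_inr]
      show (arcOSet a b).le (Fc (u : XO X O)) (Fc (v : XO X O))
      rw [hgu, hgv]; exact hσ
    · rintro ⟨h, hg'⟩
      obtain ⟨pu, hpu, -, -⟩ := mem_USet_inr_form hsub u.2
      obtain ⟨pv, hpv, -, -⟩ := mem_USet_inr_form hsub v.2
      refine ⟨h, pu.1, pu.2, pv.1, pv.2, by rw [hpu], by rw [hpv], ?_⟩
      have hgu : Fc (u : XO X O) = pu.1 := by rw [hpu, Fc_inr]
      have hgv : Fc (v : XO X O) = pv.1 := by rw [hpv, Fc_inr]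
      rw [← hgu, ← hgv]
      exact hg'
  rw [hEq]
  exact (hN.preimage ((hfc.comp continuous_fst).prodMk (hfc.comp continuous_snd))).inter
    ((arc_isClosed h2).preimage ((hgc.comp continuous_fst).prodMk (hgc.comp continuous_snd)))

end Rev

/-- For `X` a locally Nachbin ordered space and `O` an open
neighbourhood of `⋆`, the locally ordered space `X_O` is locally Nachbin iff
`O` is closed in `X`. -/
theorem stmt13 {X : Type u} [TopologicalSpace X] (𝔅 : Set (OSet X))
    (h𝔅 : IsOrderedBasis 𝔅) (hN : IsLocallyNachbin 𝔅)
    (star : X) (O : Set X) (hO : IsOpen O) (hstar : star ∈ O) :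
    IsLocallyNachbin (XOBasis 𝔅 O) ↔ IsClosed O := by
  constructor
  · intro hLN
    by_contra hncl
    obtain ⟨t₀, ht₀c, ht₀⟩ : ∃ t₀, t₀ ∈ closure O ∧ t₀ ∉ O := by
      by_contra hc
      push_neg at hc
      exact hncl (isClosed_of_closure_subset hc)
    obtain ⟨c, hc, ht₀B, -⟩ := h𝔅.isBasis.exists_subset_of_mem_open (mem_univ t₀) isOpen_univ
    obtain ⟨B, hB, rfl⟩ := hc
    have hπ := Real.pi_pos
    have h1 : (0:ℝ) < Real.pi - 0 := by linarith
    have h2 : Real.pi - 0 < 2 * Real.pi := by linarith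
    have hαt : ∀ s₁ s₂ s₃, (arcOSet 0 Real.pi).le s₁ s₂ → (arcOSet 0 Real.pi).le s₂ s₃ →
        (arcOSet 0 Real.pi).le s₁ s₃ := fun _ _ _ h h' => arc_le_trans h2 h h'
    set s : Circle := Circle.exp (Real.pi/2) with hs_def
    have hs : s ∈ (arcOSet 0 Real.pi).carrier := ⟨Real.pi/2, ⟨by linarith, by linarith⟩, rfl⟩
    have hU : UOSet O (arcOSet 0 Real.pi) B ∈ openPosets (XOBasis 𝔅 O) :=
      mem_openPosets_of_mem ⟨0, Real.pi, h1, h2, B, mem_openPosets_of_mem hB, rfl⟩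
    have hxU : (Sum.inr (s, ⟨t₀, ht₀⟩) : XO X O) ∈ (UOSet O (arcOSet 0 Real.pi) B).carrier :=
      mem_USet_inr.mpr ⟨hs, ht₀B⟩
    obtain ⟨O', hO'op, hxO', hlaxU, hNach⟩ := hLN (Sum.inr (s, ⟨t₀, ht₀⟩)) _ hU hxU
    obtain ⟨U', hU'B, hxU', hlaxU'⟩ := hO'op _ hxO'
    obtain ⟨a', b', h1', h2', A', hA', rfl⟩ := hU'B
    obtain ⟨hsarc, ht₀A'⟩ := mem_USet_inr.mp hxU'
    have hU'open : IsOpen (UOSet O (arcOSet a' b') A').carrier :=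
      isOpen_USet hO arc_carrier_isOpen (openPosets_carrier_isOpen h𝔅 hA')
    have hpre : IsOpen (qO O ⁻¹' (UOSet O (arcOSet a' b') A').carrier) :=
      hU'open.preimage (continuous_qO O)
    have hmem1 : ((s, t₀) : Circle × X) ∈ qO O ⁻¹' (UOSet O (arcOSet a' b') A').carrier := by
      rw [mem_preimage, qO_not_mem ht₀]; exact hxU'
    obtain ⟨V₁, W₁, hV₁, hW₁, hsV₁, ht₀W₁, hVW₁⟩ := isOpen_prod_iff.mp hpre s t₀ hmem1
    obtain ⟨θ, hθ, hθs⟩ := hsarc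
    have hJ : IsOpen (Ioo a' b' ∩ Circle.exp ⁻¹' V₁) :=
      isOpen_Ioo.inter (hV₁.preimage circle_exp_continuous)
    have hθJ : θ ∈ Ioo a' b' ∩ Circle.exp ⁻¹' V₁ :=
      ⟨hθ, by rw [mem_preimage, hθs]; exact hsV₁⟩
    obtain ⟨ε, hε, hball⟩ := Metric.isOpen_iff.mp hJ θ hθJ
    have hθ'J : θ + ε/2 ∈ Ioo a' b' ∩ Circle.exp ⁻¹' V₁ := by
      apply hball
      rw [Metric.mem_ball, Real.dist_eq]
      rw [abs_of_pos (by linarith : (0:ℝ) < θ + ε/2 - θ)]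
      linarith
    set s' : Circle := Circle.exp (θ + ε/2) with hs'_def
    have hne : s' ≠ s := by
      intro h
      have := arc_inj h2' hθ'J.1 hθ (h.trans hθs.symm)
      linarith
    have hs'V₁ : s' ∈ V₁ := hθ'J.2
    have hx''U' : (Sum.inr (s', ⟨t₀, ht₀⟩) : XO X O) ∈ (UOSet O (arcOSet a' b') A').carrier := by
      have hm : ((s', t₀) : Circle × X) ∈ qO O ⁻¹' (UOSet O (arcOSet a' b') A').carrier :=
        hVW₁ ⟨hs'V₁, ht₀W₁⟩
      rw [mem_preimage, qO_not_mem ht₀] at hm; exact hm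
    have hx''O' : (Sum.inr (s', ⟨t₀, ht₀⟩) : XO X O) ∈ O'.carrier := hlaxU'.1 hx''U'
    have key : ∀ (σ₁ σ₂ : Circle) (y y' : XO X O) (hy : y ∈ O'.carrier)
        (hy' : y' ∈ O'.carrier), y = qO O (σ₁, t₀) → y' = qO O (σ₂, t₀) → O'.le y y' := by
      intro σ₁ σ₂ y y' hy hy' hyq hy'q
      by_contra hnle
      have hcmem : (⟨⟨y, hy⟩, ⟨y', hy'⟩⟩ : ↥O'.carrier × ↥O'.carrier) ∈
          {p : ↥O'.carrier × ↥O'.carrier | O'.le (p.1 : XO X O) (p.2 : XO X O)}ᶜ := hnle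
      obtain ⟨NV, NW, hNV, hNW, hyNV, hy'NW, hVWsub⟩ :=
        isOpen_prod_iff.mp hNach.isOpen_compl _ _ hcmem
      obtain ⟨N₁, hN₁, hN₁eq⟩ := isOpen_induced_iff.mp hNV
      obtain ⟨N₂, hN₂, hN₂eq⟩ := isOpen_induced_iff.mp hNW
      have hq1 : ((σ₁, t₀) : Circle × X) ∈ qO O ⁻¹' N₁ := by
        rw [mem_preimage, ← hyq]
        have hyN : (⟨y, hy⟩ : ↥O'.carrier) ∈ Subtype.val ⁻¹' N₁ := by rw [hN₁eq]; exact hyNV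
        exact hyN
      have hq2 : ((σ₂, t₀) : Circle × X) ∈ qO O ⁻¹' N₂ := by
        rw [mem_preimage, ← hy'q]
        have hyN : (⟨y', hy'⟩ : ↥O'.carrier) ∈ Subtype.val ⁻¹' N₂ := by rw [hN₂eq]; exact hy'NW
        exact hyN
      obtain ⟨V₂, W₂, hV₂, hW₂, hσ₁V₂, ht₀W₂, hVW₂⟩ :=
        isOpen_prod_iff.mp (hN₁.preimage (continuous_qO O)) σ₁ t₀ hq1
      obtain ⟨V₃, W₃, hV₃, hW₃, hσ₂V₃, ht₀W₃, hVW₃⟩ :=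
        isOpen_prod_iff.mp (hN₂.preimage (continuous_qO O)) σ₂ t₀ hq2
      have hGopen : IsOpen (W₂ ∩ W₃ ∩ A'.carrier) :=
        (hW₂.inter hW₃).inter (openPosets_carrier_isOpen h𝔅 hA')
      have hGmem : t₀ ∈ W₂ ∩ W₃ ∩ A'.carrier := ⟨⟨ht₀W₂, ht₀W₃⟩, ht₀A'⟩
      obtain ⟨t, htG, htO⟩ := mem_closure_iff.mp ht₀c _ hGopen hGmem
      have haN₁ : (Sum.inl ⟨t, htO⟩ : XO X O) ∈ N₁ := by
        have hm := hVW₂ (⟨hσ₁V₂, htG.1.1⟩ : (σ₁, t) ∈ V₂ ×ˢ W₂)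
        rw [mem_preimage, qO_mem htO] at hm; exact hm
      have haN₂ : (Sum.inl ⟨t, htO⟩ : XO X O) ∈ N₂ := by
        have hm := hVW₃ (⟨hσ₂V₃, htG.1.2⟩ : (σ₂, t) ∈ V₃ ×ˢ W₃)
        rw [mem_preimage, qO_mem htO] at hm; exact hm
      have haO' : (Sum.inl ⟨t, htO⟩ : XO X O) ∈ O'.carrier :=
        hlaxU'.1 (mem_USet_inl.mpr htG.2)
      have halea : O'.le (Sum.inl ⟨t, htO⟩) (Sum.inl ⟨t, htO⟩) := by
        apply hlaxU'.2
        have hsarc' : s ∈ (arcOSet a' b').carrier := ⟨θ, hθ, hθs⟩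
        exact Relation.TransGen.single ⟨(s, t), (s, t), arc_le_refl hsarc',
          openPosets_le_refl h𝔅 hA' htG.2, qO_mem htO, qO_mem htO⟩
      have hpair : (⟨⟨Sum.inl ⟨t, htO⟩, haO'⟩, ⟨Sum.inl ⟨t, htO⟩, haO'⟩⟩ :
          ↥O'.carrier × ↥O'.carrier) ∈ NV ×ˢ NW := by
        constructor
        · show (⟨Sum.inl ⟨t, htO⟩, haO'⟩ : ↥O'.carrier) ∈ NV
          rw [← hN₁eq]; exact haN₁
        · show (⟨Sum.inl ⟨t, htO⟩, haO'⟩ : ↥O'.carrier) ∈ NW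
          rw [← hN₂eq]; exact haN₂
      exact hVWsub hpair halea
    have hOlex1 : O'.le (Sum.inr (s, ⟨t₀, ht₀⟩)) (Sum.inr (s', ⟨t₀, ht₀⟩)) :=
      key s s' _ _ hxO' hx''O' (by rw [qO_not_mem ht₀]) (by rw [qO_not_mem ht₀])
    have hOlex2 : O'.le (Sum.inr (s', ⟨t₀, ht₀⟩)) (Sum.inr (s, ⟨t₀, ht₀⟩)) :=
      key s' s _ _ hx''O' hxO' (by rw [qO_not_mem ht₀]) (by rw [qO_not_mem ht₀])
    have hUx1 : Relation.TransGen (leOne O (arcOSet 0 Real.pi) B)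
        (Sum.inr (s, ⟨t₀, ht₀⟩)) (Sum.inr (s', ⟨t₀, ht₀⟩)) := hlaxU.2 _ _ hOlex1
    have hUx2 : Relation.TransGen (leOne O (arcOSet 0 Real.pi) B)
        (Sum.inr (s', ⟨t₀, ht₀⟩)) (Sum.inr (s, ⟨t₀, ht₀⟩)) := hlaxU.2 _ _ hOlex2
    obtain ⟨σa, ta, σb, tb, hxa, hxb, hab⟩ :=
      (collapse_fwd (h𝔅.isPoset B hB) hαt hUx1).2 rfl ht₀
    obtain ⟨σc, tc, σd, td, hxc, hxd, hcd⟩ :=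
      (collapse_fwd (h𝔅.isPoset B hB) hαt hUx2).2 rfl ht₀
    obtain ⟨ea, -⟩ := Prod.mk.inj (Sum.inr.inj hxa)
    obtain ⟨eb, -⟩ := Prod.mk.inj (Sum.inr.inj hxb)
    obtain ⟨ec, -⟩ := Prod.mk.inj (Sum.inr.inj hxc)
    obtain ⟨ed, -⟩ := Prod.mk.inj (Sum.inr.inj hxd)
    rw [← ea, ← eb] at hab
    rw [← ec, ← ed] at hcd
    exact hne (arc_le_antisymm h2 hcd hab)
  · intro hcl
    intro x P hP hxP
    obtain ⟨Ub, hUbB, hxUb, hlaxP⟩ := hP x hxP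
    obtain ⟨a, b, h1, h2, A, hA, rfl⟩ := hUbB
    have hαt : ∀ s₁ s₂ s₃, (arcOSet a b).le s₁ s₂ → (arcOSet a b).le s₂ s₃ →
        (arcOSet a b).le s₁ s₃ := fun _ _ _ h h' => arc_le_trans h2 h h'
    have hαl : ∀ s s', (arcOSet a b).le s s' → (arcOSet a b).le s s :=
      fun _ _ h => arc_le_refl (arc_le_mem h).1
    cases x with
    | inl t =>
      have htA : (t : X) ∈ A.carrier := mem_USet_inl.mp hxUb
      obtain ⟨A₃, hA₃, htA₃, hA₃O, hA₃A, hA₃le, hA₃N⟩ := nachbin_shrink h𝔅 hN hA htA hO t.2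
      refine ⟨⟨USet O (arcOSet a b).carrier A₃.carrier, Rinl O A₃⟩, ?_, ?_, ?_,
        nachbin_inl _ hA₃O hA₃N⟩
      · intro u hu
        obtain ⟨w, hw, hwA₃⟩ := mem_USet_inl_form hA₃O hu
        obtain ⟨B', hB', hwB', hsubB'⟩ := hA₃ (w : X) hwA₃
        refine ⟨UOSet O (arcOSet a b) B',
          ⟨a, b, h1, h2, B', mem_openPosets_of_mem hB', rfl⟩, ?_, ?_, ?_⟩
        · rw [hw]; exact mem_USet_inl.mpr hwB'
        · exact USet_mono hsubB'.1
        · intro p q hpq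
          obtain ⟨tu, tv, hp, hq, hle⟩ := collapse_in (h𝔅.isPoset B' hB')
            (fun y hy => hA₃O (hsubB'.1 hy)) hpq
          refine ⟨?_, ⟨tu, hp⟩, ⟨tv, hq⟩⟩
          rw [hp, hq]
          exact hsubB'.2 _ _ hle
      · exact mem_USet_inl.mpr htA₃
      · refine ⟨fun y hy => hlaxP.1 (USet_mono hA₃A hy), ?_⟩
        rintro p q ⟨hle, ⟨tu, hp⟩, ⟨tv, hq⟩⟩
        have hle' := (hA₃le _ _ hle).1
        have hp2p : XO.p2 p = (tu : X) := by rw [hp]; rfl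
        have hp2q : XO.p2 q = (tv : X) := by rw [hq]; rfl
        rw [hp2p, hp2q] at hle'
        apply hlaxP.2
        show Relation.TransGen (leOne O (arcOSet a b) A) p q
        have hmid := arc_mid_mem (a := a) (b := b) h1
        have hres := lift0 (O := O) hαl hle' _ _ (arc_le_refl hmid)
        rw [qO_mem tu.2, qO_mem tv.2] at hres
        rw [hp, hq]
        exact hres
    | inr pp =>
      obtain ⟨hppα, hppA⟩ := mem_USet_inr.mp hxUb
      obtain ⟨A₃, hA₃, htA₃, hA₃O, hA₃A, hA₃le, hA₃N⟩ :=
        nachbin_shrink h𝔅 hN hA hppA hcl.isOpen_compl pp.2.2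
      refine ⟨⟨USet O (arcOSet a b).carrier A₃.carrier, Rinr O (arcOSet a b) A₃⟩, ?_, ?_, ?_,
        nachbin_inr hO hcl h2 hA₃O hA₃N⟩
      · intro u hu
        obtain ⟨qq, hqq, hqα, hqA₃⟩ := mem_USet_inr_form hA₃O hu
        obtain ⟨B', hB', hwB', hsubB'⟩ := hA₃ _ hqA₃
        refine ⟨UOSet O (arcOSet a b) B',
          ⟨a, b, h1, h2, B', mem_openPosets_of_mem hB', rfl⟩, ?_, USet_mono hsubB'.1, ?_⟩
        · rw [hqq]; exact mem_USet_inr.mpr ⟨hqα, hwB'⟩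
        · intro p q hpq
          obtain ⟨σ, tu, σ', tv, hp, hq, hσ, hle⟩ := collapse_out (h𝔅.isPoset B' hB')
            (fun y hy => hA₃O (hsubB'.1 hy)) hαt hpq
          refine ⟨?_, σ, tu, σ', tv, hp, hq, hσ⟩
          rw [hp, hq]
          exact hsubB'.2 _ _ hle
      · exact mem_USet_inr.mpr ⟨hppα, htA₃⟩
      · refine ⟨fun y hy => hlaxP.1 (USet_mono hA₃A hy), ?_⟩
        rintro p q ⟨hle, σ, tu, σ', tv, hp, hq, hσ⟩
        have hle' := (hA₃le _ _ hle).1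
        have hp2p : XO.p2 p = (tu : X) := by rw [hp]; rfl
        have hp2q : XO.p2 q = (tv : X) := by rw [hq]; rfl
        rw [hp2p, hp2q] at hle'
        apply hlaxP.2
        show Relation.TransGen (leOne O (arcOSet a b) A) p q
        have hres := lift0 (O := O) hαl hle' σ σ' hσ
        rw [qO_not_mem tu.2, qO_not_mem tv.2] at hres
        rw [hp, hq]
        exact hres
end

section
/- Let X be a locally ordered space whose underlying topology is Hausdorff, and ∗ ∈ X. In the category of locally ordered spaces with Hausdorff underlying topology and locally increasing maps, the pair i_∗, c_∗ : S¹ → S⃗¹ × X (where i_∗(s) = (s,∗) and c_∗(s) = (1,∗)) has a coequalizer if, and only if, the family of clopen neighbourhoods of ∗ in X has a smallest element O; in that case q_O : S⃗¹ × X → X_O is the coequalizer. -/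
universe u v w v'

/-! ## The category of locally ordered spaces -/

/-- A bundled locally ordered space (an object of the category `LPO`). -/
structure LocOrdSpace : Type (u + 1) where
  carrier : Type u
  top : TopologicalSpace carrier
  basis : Set (OSet carrier)
  isBasis : @IsOrderedBasis carrier top basis

/-- `g : B → C` is the coequalizer of `i, j : A → B` in the full subcategory of
locally ordered spaces (at universe `u`) whose objects satisfy `P`: `g` is locally
increasing, coequalizes `i` and `j`, and every locally increasing map
`f : B → Y` (for `Y` an object satisfying `P`) with `f ∘ i = f ∘ j` factors
through `g` by a unique locally increasing map. -/
def IsCoeqIn (P : LocOrdSpace.{u} → Prop) {A : Type w} {B : Type v} {C : Type v'}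
    (𝔅 : Set (OSet B)) (ℭ : Set (OSet C)) (i j : A → B) (g : B → C) : Prop :=
  LocIncr 𝔅 ℭ g ∧ g ∘ i = g ∘ j ∧
    ∀ Y : LocOrdSpace.{u}, P Y → ∀ f : B → Y.carrier,
      LocIncr 𝔅 Y.basis f → f ∘ i = f ∘ j →
        ∃! h : C → Y.carrier, LocIncr ℭ Y.basis h ∧ f = h ∘ g
open Set

namespace S15

open Real

lemma two_pi_pos : (0:ℝ) < 2 * Real.pi := by positivity

lemma two_lt_two_pi : (2:ℝ) < 2 * Real.pi := by
  have := Real.pi_gt_three; linarith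

lemma exp_surj : Function.Surjective Circle.exp := fun z => ⟨Complex.arg z, Circle.exp_arg z⟩

lemma exp_cont : Continuous Circle.exp := isLocalHomeomorph_circleExp.continuous

/-- Injectivity of `Circle.exp` on windows shorter than `2π`. -/
lemma exp_inj_window {a b x y : ℝ} (h2 : b - a < 2 * Real.pi)
    (hx : x ∈ Set.Ioo a b) (hy : y ∈ Set.Ioo a b) (h : Circle.exp x = Circle.exp y) :
    x = y := by
  rcases Circle.exp_eq_exp.1 h with ⟨m, hm⟩
  have hb : |x - y| < 2 * Real.pi := by
    rw [abs_sub_lt_iff]; constructor <;> [skip; skip] <;>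
      · have := hx.1; have := hx.2; have := hy.1; have := hy.2; linarith
  have hxy : x - y = m * (2 * Real.pi) := by linarith
  have hm0 : m = 0 := by
    by_contra hm0
    have : (1:ℝ) ≤ |(m:ℝ)| := by
      have := Int.one_le_abs (by exact_mod_cast hm0 : m ≠ 0)
      exact_mod_cast this
    have : 2 * Real.pi ≤ |x - y| := by
      rw [hxy, abs_mul, abs_of_pos two_pi_pos]
      nlinarith [two_pi_pos]
    linarith
  rw [hm0] at hm; simpa using hm

lemma arc_carrier_open (a b : ℝ) : IsOpen (arcOSet a b).carrier :=
  isLocalHomeomorph_circleExp.isOpenMap _ isOpen_Ioo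

lemma arc_mem_of_le {a b : ℝ} {p q : Circle} (h : (arcOSet a b).le p q) :
    p ∈ (arcOSet a b).carrier ∧ q ∈ (arcOSet a b).carrier := by
  rcases h with ⟨x, hx, y, hy, _, rfl, rfl⟩
  exact ⟨⟨x, hx, rfl⟩, ⟨y, hy, rfl⟩⟩

lemma arc_refl {a b : ℝ} {p : Circle} (h : p ∈ (arcOSet a b).carrier) :
    (arcOSet a b).le p p := by
  rcases h with ⟨x, hx, rfl⟩
  exact ⟨x, hx, x, hx, le_refl x, rfl, rfl⟩

lemma arc_isPoset {a b : ℝ} (h2 : b - a < 2 * Real.pi) : (arcOSet a b).IsPoset := by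
  refine ⟨fun p q h => arc_mem_of_le h, fun p hp => arc_refl hp, ?_, ?_⟩
  · rintro p q ⟨x, hx, y, hy, hxy, rfl, rfl⟩ ⟨x', hx', y', hy', hxy', hx'e, hy'e⟩
    have h1 : x' = y := exp_inj_window h2 hx' hy hx'e
    have h2' : y' = x := exp_inj_window h2 hy' hx hy'e
    have hxy2 : x = y := le_antisymm hxy (by linarith)
    rw [hxy2]
  · rintro p q r ⟨x, hx, y, hy, hxy, rfl, rfl⟩ ⟨x', hx', y', hy', hxy', hx'e, rfl⟩
    have h1 : x' = y := exp_inj_window h2 hx' hy hx'e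
    exact ⟨x, hx, y', hy', by linarith [h1 ▸ hxy'], rfl, rfl⟩

end S15
namespace S15

lemma arc_nonempty {a b : ℝ} (h : 0 < b - a) : ((a+b)/2) ∈ Set.Ioo a b :=
  ⟨by linarith, by linarith⟩

lemma arc_mem_dCircleBasis {a b : ℝ} (h1 : 0 < b - a) (h2 : b - a < 2 * Real.pi) :
    arcOSet a b ∈ dCircleBasis := ⟨a, b, h1, h2, rfl⟩

/-- Refinement of two arcs around a common point. -/
lemma arc_refine {a b a' b' : ℝ} (h1 : 0 < b - a) (h2 : b - a < 2 * Real.pi)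
    (h1' : 0 < b' - a') (h2' : b' - a' < 2 * Real.pi) {s : Circle}
    (hs : s ∈ (arcOSet a b).carrier) (hs' : s ∈ (arcOSet a' b').carrier) :
    ∃ c d : ℝ, 0 < d - c ∧ d - c < 2 * Real.pi ∧ s ∈ (arcOSet c d).carrier ∧
      (arcOSet c d).laxSub (arcOSet a b) ∧ (arcOSet c d).laxSub (arcOSet a' b') := by
  rcases hs with ⟨x, hx, rfl⟩
  rcases hs' with ⟨x', hx', hxe⟩
  rcases Circle.exp_eq_exp.1 hxe.symm with ⟨m, hm⟩
  -- x = x' + m * 2π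
  set e : ℝ := (m : ℝ) * (2 * Real.pi) with he
  have hxx' : x = x' + e := hm
  refine ⟨max a (a' + e), min b (b' + e), ?_, ?_, ?_, ?_, ?_⟩
  · have hx1 := hx.1; have hx2 := hx.2
    have h3 : a < x := hx1
    have : max a (a' + e) < x := by
      apply max_lt hx1; have := hx'.1; linarith
    have : x < min b (b' + e) := by
      apply lt_min hx2; have := hx'.2; linarith
    linarith [max_lt hx.1 (show a' + e < x by have := hx'.1; linarith),
      lt_min hx.2 (show x < b' + e by have := hx'.2; linarith)]
  · calc min b (b' + e) - max a (a' + e) ≤ b - a := by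
          have := le_max_left a (a' + e); have := min_le_left b (b' + e); linarith
      _ < 2 * Real.pi := h2
  · exact ⟨x, ⟨max_lt hx.1 (by have := hx'.1; linarith),
      lt_min hx.2 (by have := hx'.2; linarith)⟩, rfl⟩
  · constructor
    · rintro p ⟨y, hy, rfl⟩
      exact ⟨y, ⟨lt_of_le_of_lt (le_max_left _ _) hy.1, lt_of_lt_of_le hy.2 (min_le_left _ _)⟩, rfl⟩
    · rintro p q ⟨y, hy, z, hz, hyz, rfl, rfl⟩
      exact ⟨y, ⟨lt_of_le_of_lt (le_max_left _ _) hy.1, lt_of_lt_of_le hy.2 (min_le_left _ _)⟩,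
        z, ⟨lt_of_le_of_lt (le_max_left _ _) hz.1, lt_of_lt_of_le hz.2 (min_le_left _ _)⟩,
        hyz, rfl, rfl⟩
  · have hmem : ∀ y : ℝ, y ∈ Set.Ioo (max a (a' + e)) (min b (b' + e)) →
        (y - e) ∈ Set.Ioo a' b' := by
      intro y hy
      constructor
      · have := lt_of_le_of_lt (le_max_right a (a' + e)) hy.1; linarith
      · have := lt_of_lt_of_le hy.2 (min_le_right b (b' + e)); linarith
    have hexp : ∀ y : ℝ, Circle.exp (y - e) = Circle.exp y := by
      intro y; exact (Circle.exp_eq_exp.2 ⟨m, by rw [he]; ring⟩).symm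
    constructor
    · rintro p ⟨y, hy, rfl⟩
      exact ⟨y - e, hmem y hy, hexp y⟩
    · rintro p q ⟨y, hy, z, hz, hyz, rfl, rfl⟩
      exact ⟨y - e, hmem y hy, z - e, hmem z hz, by linarith, hexp y, hexp z⟩

/-- Every point of the circle lies in an arc of length 2. -/
lemma exists_arc_mem (s : Circle) :
    ∃ a b : ℝ, 0 < b - a ∧ b - a < 2 * Real.pi ∧ s ∈ (arcOSet a b).carrier := by
  obtain ⟨θ, rfl⟩ := exp_surj s
  exact ⟨θ - 1, θ + 1, by linarith, by linarith [two_lt_two_pi],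
    ⟨θ, ⟨by linarith, by linarith⟩, rfl⟩⟩

/-- The proper open arcs form a topological basis of the circle. -/
lemma arcs_isTopologicalBasis :
    TopologicalSpace.IsTopologicalBasis (OSet.carrier '' dCircleBasis) := by
  apply TopologicalSpace.isTopologicalBasis_of_isOpen_of_nhds
  · rintro u ⟨B, ⟨a, b, _, _, rfl⟩, rfl⟩
    exact arc_carrier_open a b
  · intro s u hsu hu
    obtain ⟨θ, rfl⟩ := exp_surj s
    have hc : IsOpen (Circle.exp ⁻¹' u) := hu.preimage exp_cont
    rcases Metric.isOpen_iff.1 hc θ hsu with ⟨δ, hδ, hball⟩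
    set δ' := min (δ / 2) 1 with hδ'
    have hδ'0 : 0 < δ' := lt_min (by linarith) one_pos
    have hδ'1 : δ' ≤ 1 := min_le_right _ _
    refine ⟨(arcOSet (θ - δ') (θ + δ')).carrier,
      ⟨arcOSet (θ - δ') (θ + δ'), arc_mem_dCircleBasis (by linarith)
        (by linarith [two_lt_two_pi]), rfl⟩, ⟨θ, ⟨by linarith, by linarith⟩, rfl⟩, ?_⟩
    rintro p ⟨y, hy, rfl⟩
    apply hball
    simp only [Metric.mem_ball, Real.dist_eq]
    have : |y - θ| < δ' := by
      rw [abs_sub_lt_iff]; constructor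
      · have := hy.2; linarith
      · have := hy.1; linarith
    calc |y - θ| < δ' := this
      _ ≤ δ / 2 := min_le_left _ _
      _ < δ := by linarith

end S15
namespace S15

section Basis

variable {X : Type u} [TopologicalSpace X] {𝔅 : Set (OSet X)}

lemma basis_carrier_open (h𝔅 : IsOrderedBasis 𝔅) {B : OSet X} (hB : B ∈ 𝔅) :
    IsOpen B.carrier :=
  h𝔅.isBasis.isOpen ⟨B, hB, rfl⟩

lemma mem_basis_of_open (h𝔅 : IsOrderedBasis 𝔅) {t : X} {V : Set X} (hV : IsOpen V)
    (ht : t ∈ V) : ∃ B ∈ 𝔅, t ∈ B.carrier ∧ B.carrier ⊆ V := by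
  rcases h𝔅.isBasis.exists_subset_of_mem_open ht hV with ⟨u, ⟨B, hB, rfl⟩, htu, hu⟩
  exact ⟨B, hB, htu, hu⟩

/-- Shrink a basis element around a point into an open set, compatibly with orders. -/
lemma basis_shrink (h𝔅 : IsOrderedBasis 𝔅) {B : OSet X} (hB : B ∈ 𝔅) {t : X}
    (ht : t ∈ B.carrier) {V : Set X} (hV : IsOpen V) (htV : t ∈ V) :
    ∃ B' ∈ 𝔅, t ∈ B'.carrier ∧ B'.carrier ⊆ B.carrier ∩ V ∧
      ∀ p q, B'.le p q → B.le p q := by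
  rcases mem_basis_of_open h𝔅 hV htV with ⟨B₂, hB₂, ht₂, hsub₂⟩
  rcases h𝔅.compat t B hB B₂ hB₂ ht ht₂ with ⟨B₃, hB₃, ht₃, hsub₃, hle₃⟩
  exact ⟨B₃, hB₃, ht₃, fun x hx => ⟨(hsub₃ hx).1, hsub₂ (hsub₃ hx).2⟩,
    fun p q h => (hle₃ p q h).1⟩

end Basis

lemma basis_mem_openPosets {X : Type u} {𝔅 : Set (OSet X)} {B : OSet X} (hB : B ∈ 𝔅) :
    B ∈ openPosets 𝔅 :=
  fun _ hx => ⟨B, hB, hx, subset_rfl, fun _ _ h => h⟩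

section XOBasic

variable {X : Type u} {O : Set X}

lemma qO_pos {t : X} (ht : t ∈ O) (s : Circle) : qO O (s, t) = Sum.inl ⟨t, ht⟩ :=
  dif_pos ht

lemma qO_neg {t : X} (ht : t ∉ O) (s : Circle) : qO O (s, t) = Sum.inr (s, ⟨t, ht⟩) :=
  dif_neg ht

lemma qO_surj : Function.Surjective (qO O) := by
  rintro (⟨t, ht⟩ | ⟨s, t, ht⟩)
  · exact ⟨(1, t), qO_pos ht 1⟩
  · exact ⟨(s, t), qO_neg ht s⟩

lemma p2_qO (x : Circle × X) : XO.p2 (qO O x) = x.2 := by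
  by_cases h : x.2 ∈ O
  · rw [show x = (x.1, x.2) from rfl, qO_pos h]; rfl
  · rw [show x = (x.1, x.2) from rfl, qO_neg h]; rfl

lemma qO_eq_inl {x : Circle × X} {t : ↥O} (h : qO O x = Sum.inl t) :
    x.2 = (t : X) ∧ x.2 ∈ O := by
  by_cases hm : x.2 ∈ O
  · rw [show x = (x.1, x.2) from rfl, qO_pos hm] at h
    exact ⟨congrArg Subtype.val (Sum.inl.inj h), hm⟩
  · rw [show x = (x.1, x.2) from rfl, qO_neg hm] at h; cases h

lemma qO_eq_inr {x : Circle × X} {s : Circle} {t : ↥(Oᶜ)}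
    (h : qO O x = Sum.inr (s, t)) : x.1 = s ∧ x.2 = (t : X) ∧ x.2 ∉ O := by
  by_cases hm : x.2 ∈ O
  · rw [show x = (x.1, x.2) from rfl, qO_pos hm] at h; cases h
  · rw [show x = (x.1, x.2) from rfl, qO_neg hm] at h
    obtain ⟨h1, h2⟩ := Prod.mk.inj (Sum.inr.inj h)
    exact ⟨h1, congrArg Subtype.val h2, hm⟩

lemma inl_mem_USet {αc : Set Circle} {A : Set X} {t : ↥O} :
    (Sum.inl t : XO X O) ∈ USet O αc A ↔ (t : X) ∈ A := by
  simp only [USet, Set.mem_union, Set.mem_image, Set.mem_setOf_eq]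
  constructor
  · rintro (⟨q, hq, h⟩ | ⟨q, _, h⟩)
    · cases h; exact hq
    · cases h
  · intro h; exact Or.inl ⟨t, h, rfl⟩

lemma inr_mem_USet {αc : Set Circle} {A : Set X} {p : Circle × ↥(Oᶜ)} :
    (Sum.inr p : XO X O) ∈ USet O αc A ↔ p.1 ∈ αc ∧ (p.2 : X) ∈ A := by
  simp only [USet, Set.mem_union, Set.mem_image, Set.mem_setOf_eq]
  constructor
  · rintro (⟨q, _, h⟩ | ⟨q, hq, h⟩)
    · cases h
    · cases h; exact hq
  · intro h; exact Or.inr ⟨p, h, rfl⟩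

lemma qO_mem_USet {αc : Set Circle} {A : Set X} {x : Circle × X} :
    qO O x ∈ USet O αc A ↔ ((x.2 ∈ O ∧ x.2 ∈ A) ∨ (x.2 ∉ O ∧ x.1 ∈ αc ∧ x.2 ∈ A)) := by
  by_cases hm : x.2 ∈ O
  · rw [show x = (x.1, x.2) from rfl, qO_pos hm]
    refine inl_mem_USet.trans ?_
    simp [hm]
  · rw [show x = (x.1, x.2) from rfl, qO_neg hm]
    refine inr_mem_USet.trans ?_
    simp [hm]

variable [TopologicalSpace X]

lemma isOpen_XO_iff {V : Set (XO X O)} : IsOpen V ↔ IsOpen (qO O ⁻¹' V) :=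
  isOpen_coinduced

lemma USet_open (hO : IsClopen O) {αc : Set Circle} (hαc : IsOpen αc) {A : Set X}
    (hA : IsOpen A) : IsOpen (USet O αc A) := by
  rw [isOpen_XO_iff]
  have : qO O ⁻¹' USet O αc A =
      (Set.univ ×ˢ (O ∩ A)) ∪ (αc ×ˢ (A ∩ Oᶜ)) := by
    ext x
    rw [Set.mem_preimage, qO_mem_USet]
    by_cases hm : x.2 ∈ O <;> simp [hm, Set.mem_prod] <;> tauto
  rw [this]
  exact ((isOpen_univ.prod (hO.2.inter hA))).union (hαc.prod (hA.inter hO.1.isOpen_compl))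

lemma XO_t2 (hO : IsClopen O) [T2Space X] : T2Space (XO X O) := by
  constructor
  intro u v huv
  -- reduce to cases on second components
  have sep2 : ∀ u v : XO X O, XO.p2 u ≠ XO.p2 v →
      ∃ Wu Wv : Set (XO X O), IsOpen Wu ∧ IsOpen Wv ∧ u ∈ Wu ∧ v ∈ Wv ∧ Disjoint Wu Wv := by
    intro u v h2
    rcases t2_separation h2 with ⟨U, V, hU, hV, huU, hvV, hUV⟩
    refine ⟨USet O Set.univ U, USet O Set.univ V, USet_open hO isOpen_univ hU,
      USet_open hO isOpen_univ hV, ?_, ?_, ?_⟩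
    · cases u with
      | inl t => exact inl_mem_USet.2 huU
      | inr p => exact inr_mem_USet.2 ⟨trivial, huU⟩
    · cases v with
      | inl t => exact inl_mem_USet.2 hvV
      | inr p => exact inr_mem_USet.2 ⟨trivial, hvV⟩
    · rw [Set.disjoint_left]
      rintro w hw hw'
      cases w with
      | inl t => exact (Set.disjoint_left.1 hUV) (inl_mem_USet.1 hw) (inl_mem_USet.1 hw')
      | inr p => exact (Set.disjoint_left.1 hUV) (inr_mem_USet.1 hw).2 (inr_mem_USet.1 hw').2
  by_cases h2 : XO.p2 u ≠ XO.p2 v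
  · exact sep2 u v h2
  push_neg at h2
  -- same second component: must both be inr with distinct circle points
  cases u with
  | inl t =>
    cases v with
    | inl t' =>
      exact absurd (congrArg Sum.inl (Subtype.ext h2)) huv
    | inr p =>
      exact absurd h2 (by
        have : (t : X) ∈ O := t.2
        have : (p.2 : X) ∉ O := p.2.2
        intro h; rw [show XO.p2 (Sum.inl t : XO X O) = (t : X) from rfl,
          show XO.p2 (Sum.inr p : XO X O) = (p.2 : X) from rfl] at h
        exact ‹(p.2 : X) ∉ O› (h ▸ t.2))
  | inr p =>
    cases v with
    | inl t =>
      exact absurd h2 (by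
        intro h; rw [show XO.p2 (Sum.inr p : XO X O) = (p.2 : X) from rfl,
          show XO.p2 (Sum.inl t : XO X O) = (t : X) from rfl] at h
        exact p.2.2 (h ▸ t.2))
    | inr p' =>
      have hp2 : p.2 = p'.2 := Subtype.ext h2
      have hs : p.1 ≠ p'.1 := by
        intro h; exact huv (by rw [show p = (p.1, p.2) from rfl, h, hp2])
      rcases t2_separation hs with ⟨U, V, hU, hV, hpU, hpV, hUV⟩
      refine ⟨USet O U Oᶜ, USet O V Oᶜ, USet_open hO hU hO.1.isOpen_compl,
        USet_open hO hV hO.1.isOpen_compl, inr_mem_USet.2 ⟨hpU, p.2.2⟩,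
        inr_mem_USet.2 ⟨hpV, p'.2.2⟩, ?_⟩
      rw [Set.disjoint_left]
      rintro w hw hw'
      cases w with
      | inl t => exact (inl_mem_USet.1 hw) t.2
      | inr q => exact (Set.disjoint_left.1 hUV) (inr_mem_USet.1 hw).1 (inr_mem_USet.1 hw').1

end XOBasic

end S15
namespace S15

section UOSet

variable {X : Type u} {O : Set X} {α : OSet Circle} {A : OSet X}

lemma leOne_p2 (hA : A.IsPoset) {u v : XO X O} (h : leOne O α A u v) :
    A.le (XO.p2 u) (XO.p2 v) := by
  rcases h with ⟨x, x', _, hle, rfl, rfl⟩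
  rw [p2_qO, p2_qO]; exact hle

lemma transGen_p2 (hA : A.IsPoset) {u v : XO X O}
    (h : Relation.TransGen (leOne O α A) u v) : A.le (XO.p2 u) (XO.p2 v) := by
  induction h with
  | single h => exact leOne_p2 hA h
  | tail _ h ih => exact hA.2.2.2 _ _ _ ih (leOne_p2 hA h)

lemma leOne_mem (hα : α.IsPoset) (hA : A.IsPoset) {u v : XO X O} (h : leOne O α A u v) :
    u ∈ USet O α.carrier A.carrier ∧ v ∈ USet O α.carrier A.carrier := by
  rcases h with ⟨x, x', hα', hA', rfl, rfl⟩
  have hx1 := hα.1 _ _ hα'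
  have hx2 := hA.1 _ _ hA'
  constructor
  · rw [qO_mem_USet]
    by_cases hm : x.2 ∈ O
    · exact Or.inl ⟨hm, hx2.1⟩
    · exact Or.inr ⟨hm, hx1.1, hx2.1⟩
  · rw [qO_mem_USet]
    by_cases hm : x'.2 ∈ O
    · exact Or.inl ⟨hm, hx2.2⟩
    · exact Or.inr ⟨hm, hx1.2, hx2.2⟩

lemma transGen_mem (hα : α.IsPoset) (hA : A.IsPoset) {u v : XO X O}
    (h : Relation.TransGen (leOne O α A) u v) :
    u ∈ USet O α.carrier A.carrier ∧ v ∈ USet O α.carrier A.carrier := by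
  induction h with
  | single h => exact leOne_mem hα hA h
  | tail _ h ih => exact ⟨ih.1, (leOne_mem hα hA h).2⟩

/-- Structure of transitive chains: monotone second components, and on
constant-second-component stretches outside `O`, monotone circle components. -/
lemma transGen_struct (hα : α.IsPoset) (hA : A.IsPoset) {u w : XO X O}
    (h : Relation.TransGen (leOne O α A) u w) :
    A.le (XO.p2 u) (XO.p2 w) ∧
      (XO.p2 u = XO.p2 w → ∀ (s s' : Circle) (τ τ' : ↥(Oᶜ)),
        u = Sum.inr (s, τ) → w = Sum.inr (s', τ') → α.le s s') := by
  induction h using Relation.TransGen.head_induction_on with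
  | single h =>
    refine ⟨leOne_p2 hA h, ?_⟩
    rintro _ s s' τ τ' rfl rfl
    rcases h with ⟨x, x', hαle, _, hx, hx'⟩
    obtain ⟨h1, _, _⟩ := qO_eq_inr hx
    obtain ⟨h1', _, _⟩ := qO_eq_inr hx'
    rw [← h1, ← h1']; exact hαle
  | head hstep htail ihv =>
    rename_i u' v
    refine ⟨hA.2.2.2 _ _ _ (leOne_p2 hA hstep) ihv.1, ?_⟩
    rintro hp2 s s' τ τ' rfl rfl
    -- middle point has the same second component
    have h1 : A.le (XO.p2 (Sum.inr (s, τ) : XO X O)) (XO.p2 v) := leOne_p2 hA hstep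
    have h2 : A.le (XO.p2 v) (XO.p2 (Sum.inr (s', τ') : XO X O)) := ihv.1
    rw [← hp2] at h2
    have hmid : XO.p2 v = XO.p2 (Sum.inr (s, τ) : XO X O) := hA.2.2.1 _ _ h2 h1
    -- v is of the form inr
    rcases hstep with ⟨x, x', hαle, _, hx, hx'⟩
    obtain ⟨hs1, ht1, _⟩ := qO_eq_inr hx
    have hvmem : x'.2 ∉ O := by
      have : XO.p2 (qO O x') = x'.2 := p2_qO x'
      rw [hx', hmid] at this
      intro hmem
      rw [show XO.p2 (Sum.inr (s, τ) : XO X O) = (τ : X) from rfl] at this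
      exact τ.2 (this ▸ hmem)
    rw [show x' = (x'.1, x'.2) from rfl, qO_neg hvmem] at hx'
    have := ihv.2 (by rw [hmid]; exact hp2) x'.1 s' ⟨x'.2, hvmem⟩ τ' hx'.symm rfl
    exact hα.2.2.2 _ _ _ (hs1 ▸ hαle) this

lemma UOSet_isPoset (hα : α.IsPoset) (hA : A.IsPoset)
    (hαne : ∃ σ, σ ∈ α.carrier) : (UOSet O α A).IsPoset := by
  refine ⟨fun u v h => transGen_mem hα hA h, ?_, ?_, fun u v w h h' => h.trans h'⟩
  · rintro u hu
    rcases hu with ⟨t, ht, rfl⟩ | ⟨p, hp, rfl⟩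
    · obtain ⟨σ, hσ⟩ := hαne
      refine Relation.TransGen.single ⟨(σ, (t : X)), (σ, (t : X)), hα.2.1 σ hσ,
        hA.2.1 _ ht, ?_, ?_⟩ <;> exact qO_pos t.2 σ
    · refine Relation.TransGen.single ⟨(p.1, (p.2 : X)), (p.1, (p.2 : X)),
        hα.2.1 _ hp.1, hA.2.1 _ hp.2, ?_, ?_⟩ <;>
        · rw [qO_neg p.2.2]
  · intro u v huv hvu
    have h1 := (transGen_struct hα hA huv).1
    have h2 := (transGen_struct hα hA hvu).1
    have hp2 : XO.p2 u = XO.p2 v := hA.2.2.1 _ _ h1 h2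
    cases u with
    | inl t =>
      cases v with
      | inl t' => exact congrArg Sum.inl (Subtype.ext hp2)
      | inr p =>
        have h' : (t : X) = (p.2 : X) := hp2
        exact absurd (h' ▸ t.2) p.2.2
    | inr p =>
      cases v with
      | inl t =>
        have h' : (p.2 : X) = (t : X) := hp2
        exact absurd (h' ▸ t.2) p.2.2
      | inr p' =>
        have hs1 := (transGen_struct hα hA huv).2 hp2 p.1 p'.1 p.2 p'.2 rfl rfl
        have hs2 := (transGen_struct hα hA hvu).2 hp2.symm p'.1 p.1 p'.2 p.2 rfl rfl
        have : p.1 = p'.1 := hα.2.2.1 _ _ hs1 hs2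
        have hp22 : p.2 = p'.2 := Subtype.ext hp2
        rw [show p = (p.1, p.2) from rfl, this, hp22]

end UOSet

end S15
namespace S15

/-- The restricted ordered basis on `X_O`: only `U_{α,B}` for `B ∈ 𝔅`. -/
def goodBasis {X : Type u} (𝔅 : Set (OSet X)) (O : Set X) : Set (OSet (XO X O)) :=
  {C | ∃ a b : ℝ, 0 < b - a ∧ b - a < 2 * Real.pi ∧ ∃ B ∈ 𝔅, C = UOSet O (arcOSet a b) B}

lemma goodBasis_subset_XOBasis {X : Type u} {𝔅 : Set (OSet X)} {O : Set X} :
    goodBasis 𝔅 O ⊆ XOBasis 𝔅 O := by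
  rintro C ⟨a, b, h1, h2, B, hB, rfl⟩
  exact ⟨a, b, h1, h2, B, basis_mem_openPosets hB, rfl⟩

section GoodBasis

variable {X : Type u} [TopologicalSpace X] {𝔅 : Set (OSet X)} {O : Set X}

lemma leOne_mono {α α' : OSet Circle} {A A' : OSet X}
    (hα : ∀ p q, α.le p q → α'.le p q) (hA : ∀ p q, A.le p q → A'.le p q)
    {u v : XO X O} (h : leOne O α A u v) : leOne O α' A' u v := by
  rcases h with ⟨x, x', h1, h2, h3, h4⟩
  exact ⟨x, x', hα _ _ h1, hA _ _ h2, h3, h4⟩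

lemma leOne_inO {α'' α : OSet Circle} {B₃ B : OSet X}
    (hsubO : B₃.carrier ⊆ O) (hBle : ∀ p q, B₃.le p q → B.le p q)
    (hB₃mem : ∀ p q, B₃.le p q → p ∈ B₃.carrier ∧ q ∈ B₃.carrier)
    {σ₀ : Circle} (hσ₀ : α.le σ₀ σ₀)
    {u v : XO X O} (h : leOne O α'' B₃ u v) : leOne O α B u v := by
  rcases h with ⟨x, x', _, h2, h3, h4⟩
  have hm := hB₃mem _ _ h2
  have hxO : x.2 ∈ O := hsubO hm.1
  have hx'O : x'.2 ∈ O := hsubO hm.2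
  refine ⟨(σ₀, x.2), (σ₀, x'.2), hσ₀, hBle _ _ h2, ?_, ?_⟩
  · exact (qO_pos hxO σ₀).trans ((qO_pos hxO x.1).symm.trans h3)
  · exact (qO_pos hx'O σ₀).trans ((qO_pos hx'O x'.1).symm.trans h4)

lemma goodBasis_isOrderedBasis (h𝔅 : IsOrderedBasis 𝔅) (hO : IsClopen O) :
    IsOrderedBasis (goodBasis 𝔅 O) := by
  constructor
  -- posets
  · rintro C ⟨a, b, h1, h2, B, hB, rfl⟩
    exact UOSet_isPoset (arc_isPoset h2) (h𝔅.isPoset B hB)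
      ⟨Circle.exp ((a+b)/2), (a+b)/2, arc_nonempty h1, rfl⟩
  -- topological basis
  · apply TopologicalSpace.isTopologicalBasis_of_isOpen_of_nhds
    · rintro u ⟨C, ⟨a, b, h1, h2, B, hB, rfl⟩, rfl⟩
      exact USet_open hO (arc_carrier_open a b) (basis_carrier_open h𝔅 hB)
    · intro u V huV hV
      have hpre : IsOpen (qO O ⁻¹' V) := isOpen_XO_iff.1 hV
      cases u with
      | inr p =>
        have hmem : (p.1, (p.2 : X)) ∈ (qO O ⁻¹' V) ∩ (Set.univ ×ˢ (Oᶜ : Set X)) := by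
          refine ⟨?_, trivial, p.2.2⟩
          rw [Set.mem_preimage, qO_neg p.2.2]
          exact huV
        have hW : IsOpen ((qO O ⁻¹' V) ∩ (Set.univ ×ˢ (Oᶜ : Set X))) :=
          hpre.inter (isOpen_univ.prod hO.1.isOpen_compl)
        rcases (arcs_isTopologicalBasis.prod h𝔅.isBasis).exists_subset_of_mem_open
          hmem hW with ⟨w, hw, hpw, hsub⟩
        rcases hw with ⟨αc, ⟨αo, ⟨a, b, h1, h2, rfl⟩, rfl⟩, Bc, ⟨B, hB, rfl⟩, rfl⟩
        refine ⟨USet O (arcOSet a b).carrier B.carrier,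
          ⟨UOSet O (arcOSet a b) B, ⟨a, b, h1, h2, B, hB, rfl⟩, rfl⟩,
          inr_mem_USet.2 ⟨hpw.1, hpw.2⟩, ?_⟩
        rintro w hw
        cases w with
        | inl t =>
          have htB := inl_mem_USet.1 hw
          have := (hsub (Set.mk_mem_prod hpw.1 htB)).2
          exact absurd this.2 (by simp [t.2])
        | inr q =>
          have hq := inr_mem_USet.1 hw
          have := (hsub (Set.mk_mem_prod hq.1 hq.2)).1
          rw [Set.mem_preimage, qO_neg q.2.2] at this
          exact this
      | inl t =>
        have htube : Set.univ ×ˢ ({(t : X)} : Set X) ⊆ qO O ⁻¹' V := by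
          rintro ⟨s, x⟩ ⟨-, hx⟩
          rcases hx with rfl
          rw [Set.mem_preimage, qO_pos t.2]
          exact huV
        rcases generalized_tube_lemma isCompact_univ isCompact_singleton hpre htube with
          ⟨u', v', _, hv', hu'univ, hv't, hsub⟩
        rcases mem_basis_of_open h𝔅 hv' (hv't rfl) with ⟨B, hB, htB, hBsub⟩
        refine ⟨USet O (arcOSet 0 1).carrier B.carrier,
          ⟨UOSet O (arcOSet 0 1) B, ⟨0, 1, by norm_num, by linarith [two_lt_two_pi], B, hB, rfl⟩,
            rfl⟩, inl_mem_USet.2 htB, ?_⟩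
        rintro w hw
        cases w with
        | inl t' =>
          have := hsub (Set.mk_mem_prod (hu'univ (Set.mem_univ (1 : Circle))) (hBsub (inl_mem_USet.1 hw)))
          rw [Set.mem_preimage, qO_pos t'.2] at this
          exact this
        | inr q =>
          have hq := inr_mem_USet.1 hw
          have := hsub (Set.mk_mem_prod (hu'univ (Set.mem_univ q.1)) (hBsub hq.2))
          rw [Set.mem_preimage, qO_neg q.2.2] at this
          exact this
  -- compat
  · rintro u C ⟨a, b, h1, h2, B, hB, rfl⟩ C' ⟨a', b', h1', h2', B', hB', rfl⟩ hu hu'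
    cases u with
    | inr p =>
      have hm := inr_mem_USet.1 hu
      have hm' := inr_mem_USet.1 hu'
      rcases arc_refine h1 h2 h1' h2' hm.1 hm'.1 with ⟨c, d, hc1, hc2, hsc, hl, hl'⟩
      rcases h𝔅.compat (p.2 : X) B hB B' hB' hm.2 hm'.2 with ⟨B'', hB'', htB'', hsub'', hle''⟩
      refine ⟨UOSet O (arcOSet c d) B'', ⟨c, d, hc1, hc2, B'', hB'', rfl⟩,
        inr_mem_USet.2 ⟨hsc, htB''⟩, ?_, ?_⟩
      · rintro w hw
        cases w with
        | inl t =>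
          have := inl_mem_USet.1 hw
          exact ⟨inl_mem_USet.2 ((hsub'' this).1), inl_mem_USet.2 ((hsub'' this).2)⟩
        | inr q =>
          have hq := inr_mem_USet.1 hw
          exact ⟨inr_mem_USet.2 ⟨hl.1 hq.1, (hsub'' hq.2).1⟩,
            inr_mem_USet.2 ⟨hl'.1 hq.1, (hsub'' hq.2).2⟩⟩
      · intro x y h
        constructor
        · exact Relation.TransGen.mono (fun p q hpq =>
            leOne_mono hl.2 (fun p' q' h' => (hle'' p' q' h').1) hpq) _ _ h
        · exact Relation.TransGen.mono (fun p q hpq =>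
            leOne_mono hl'.2 (fun p' q' h' => (hle'' p' q' h').2) hpq) _ _ h
    | inl t =>
      have hm := inl_mem_USet.1 hu
      have hm' := inl_mem_USet.1 hu'
      rcases h𝔅.compat (t : X) B hB B' hB' hm hm' with ⟨B₁, hB₁, htB₁, hsub₁, hle₁⟩
      rcases basis_shrink h𝔅 hB₁ htB₁ hO.2 t.2 with ⟨B₃, hB₃, htB₃, hsub₃, hle₃⟩
      have hsubO : B₃.carrier ⊆ O := fun x hx => (hsub₃ hx).2
      have hmemB₃ := (h𝔅.isPoset B₃ hB₃).1
      refine ⟨UOSet O (arcOSet 0 1) B₃,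
        ⟨0, 1, by norm_num, by linarith [two_lt_two_pi], B₃, hB₃, rfl⟩,
        inl_mem_USet.2 htB₃, ?_, ?_⟩
      · rintro w hw
        cases w with
        | inl t' =>
          have h' := inl_mem_USet.1 hw
          have := hsub₁ (hsub₃ h').1
          exact ⟨inl_mem_USet.2 this.1, inl_mem_USet.2 this.2⟩
        | inr q =>
          have hq := inr_mem_USet.1 hw
          exact absurd (hsubO hq.2) q.2.2
      · intro x y h
        have hble : ∀ p q, B₃.le p q → B.le p q ∧ B'.le p q := fun p q hpq =>
          hle₁ p q (hle₃ p q hpq)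
        constructor
        · refine Relation.TransGen.mono (fun p q hpq => ?_) _ _ h
          exact leOne_inO hsubO (fun p' q' h' => (hble p' q' h').1) hmemB₃
            (arc_refl (⟨(a+b)/2, arc_nonempty h1, rfl⟩ :
              Circle.exp ((a+b)/2) ∈ (arcOSet a b).carrier)) hpq
        · refine Relation.TransGen.mono (fun p q hpq => ?_) _ _ h
          exact leOne_inO hsubO (fun p' q' h' => (hble p' q' h').2) hmemB₃
            (arc_refl (⟨(a'+b')/2, arc_nonempty h1', rfl⟩ :
              Circle.exp ((a'+b')/2) ∈ (arcOSet a' b').carrier)) hpq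

end GoodBasis

end S15
namespace S15

lemma locIncr_mono_source {Z : Type v} {W : Type w} {𝔅₁ 𝔅₂ : Set (OSet Z)}
    {ℭ : Set (OSet W)} (h : 𝔅₁ ⊆ 𝔅₂) {f : Z → W} (hf : LocIncr 𝔅₁ ℭ f) :
    LocIncr 𝔅₂ ℭ f := by
  intro x B' hB' hm
  rcases hf x B' hB' hm with ⟨B, hB, h1, h2, h3⟩
  exact ⟨B, h hB, h1, h2, h3⟩

lemma locIncr_anti_target {Z : Type v} {W : Type w} {𝔅 : Set (OSet Z)}
    {ℭ₁ ℭ₂ : Set (OSet W)} (h : ℭ₁ ⊆ ℭ₂) {f : Z → W} (hf : LocIncr 𝔅 ℭ₂ f) :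
    LocIncr 𝔅 ℭ₁ f :=
  fun x B' hB' hm => hf x B' (h hB') hm

section Main

variable {X : Type u} [TopologicalSpace X] {𝔅 : Set (OSet X)} {O : Set X}

lemma prodBasis_carrier_eq :
    OSet.carrier '' prodBasis dCircleBasis 𝔅 =
      Set.image2 (· ×ˢ ·) (OSet.carrier '' dCircleBasis) (OSet.carrier '' 𝔅) := by
  ext w
  constructor
  · rintro ⟨C, ⟨B, hB, B', hB', rfl⟩, rfl⟩
    exact ⟨B.carrier, ⟨B, hB, rfl⟩, B'.carrier, ⟨B', hB', rfl⟩, rfl⟩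
  · rintro ⟨u, ⟨B, hB, rfl⟩, v, ⟨B', hB', rfl⟩, rfl⟩
    exact ⟨B.prod B', ⟨B, hB, B', hB', rfl⟩, rfl⟩

lemma prodBasis_isTopologicalBasis (h𝔅 : IsOrderedBasis 𝔅) :
    TopologicalSpace.IsTopologicalBasis (OSet.carrier '' prodBasis dCircleBasis 𝔅) := by
  rw [prodBasis_carrier_eq]
  exact arcs_isTopologicalBasis.prod h𝔅.isBasis

lemma locIncr_continuous {W : Type w} [TopologicalSpace W] {𝔚 : Set (OSet W)}
    (h𝔅 : IsOrderedBasis 𝔅)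
    (hW : TopologicalSpace.IsTopologicalBasis (OSet.carrier '' 𝔚))
    {f : Circle × X → W} (hf : LocIncr (prodBasis dCircleBasis 𝔅) 𝔚 f) :
    Continuous f := by
  rw [continuous_iff_continuousAt]
  intro x
  rw [ContinuousAt, Filter.tendsto_def]
  intro V hV
  rcases hW.mem_nhds_iff.1 hV with ⟨w, ⟨B', hB', rfl⟩, hfxw, hwV⟩
  rcases hf x B' hB' hfxw with ⟨B, hB, hxB, hmap, -⟩
  refine Filter.mem_of_superset
    (((prodBasis_isTopologicalBasis h𝔅).isOpen ⟨B, hB, rfl⟩).mem_nhds hxB) ?_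
  exact fun p hp => hwV (hmap p hp)

lemma Kset_closed {W : Type w} [TopologicalSpace W] [T2Space W]
    {f : Circle × X → W} (hf : Continuous f) : IsClosed (Kset f) := by
  have h : Kset f = ⋂ s : Circle, {t | f (s, t) = f (1, t)} := by
    ext t
    simp only [Kset, Set.mem_setOf_eq, Set.mem_iInter]
    exact ⟨fun h s => h s 1, fun h s s' => (h s).trans (h s').symm⟩
  rw [h]
  exact isClosed_iInter fun s => isClosed_eq
    (hf.comp (continuous_const.prodMk continuous_id))
    (hf.comp (continuous_const.prodMk continuous_id))

lemma chain_reflTransGen (r : Circle → Circle → Prop)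
    (hR : ∀ x : ℝ, ∃ ε > 0, ∀ d : ℝ, 0 ≤ d → d ≤ ε → r (Circle.exp x) (Circle.exp (x + d)))
    (hL : ∀ x : ℝ, ∃ ε > 0, ∀ d : ℝ, 0 ≤ d → d ≤ ε → r (Circle.exp (x - d)) (Circle.exp x)) :
    ∀ x z : ℝ, x ≤ z → Relation.ReflTransGen r (Circle.exp x) (Circle.exp z) := by
  intro x z hxz
  set S := {w : ℝ | w ∈ Set.Icc x z ∧ Relation.ReflTransGen r (Circle.exp x) (Circle.exp w)}
    with hS
  have hxS : x ∈ S := ⟨⟨le_refl x, hxz⟩, Relation.ReflTransGen.refl⟩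
  have hbdd : BddAbove S := ⟨z, fun w hw => hw.1.2⟩
  have hne : S.Nonempty := ⟨x, hxS⟩
  set m := sSup S with hm
  have hxm : x ≤ m := le_csSup hbdd hxS
  have hmz : m ≤ z := csSup_le hne fun w hw => hw.1.2
  have hmS : m ∈ S := by
    rcases hL m with ⟨ε, hε, hstep⟩
    by_cases hmx : m ≤ x
    · have heq : m = x := le_antisymm hmx hxm
      rw [heq]; exact hxS
    push_neg at hmx
    have h1 : m - min ε (m - x) < m := by
      have : 0 < min ε (m - x) := lt_min hε (by linarith)
      linarith
    rcases exists_lt_of_lt_csSup hne h1 with ⟨w, hwS, hw⟩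
    have hr : r (Circle.exp (m - (m - w))) (Circle.exp m) := by
      refine hstep (m - w) ?_ ?_
      · have := le_csSup hbdd hwS; linarith
      · have := min_le_left ε (m - x); linarith
    rw [show m - (m - w) = w by ring] at hr
    exact ⟨⟨hxm, hmz⟩, hwS.2.tail hr⟩
  rcases lt_or_eq_of_le hmz with hlt | heq
  · exfalso
    rcases hR m with ⟨ε, hε, hstep⟩
    have hmw : m < min (m + ε) z := lt_min (by linarith) hlt
    have hwS : min (m + ε) z ∈ S := by
      refine ⟨⟨by linarith, min_le_right _ _⟩, hmS.2.tail ?_⟩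
      have h2 := hstep (min (m + ε) z - m) (by linarith)
        (by have := min_le_left (m + ε) z; linarith)
      rw [show m + (min (m + ε) z - m) = min (m + ε) z by ring] at h2
      exact h2
    have := le_csSup hbdd hwS
    linarith
  · rw [← heq]; exact hmS.2

lemma Kset_open {W : Type w} {𝔚 : Set (OSet W)}
    (h𝔅 : IsOrderedBasis 𝔅) [TopologicalSpace W] (hW : IsOrderedBasis 𝔚)
    {f : Circle × X → W}
    (hf : LocIncr (prodBasis dCircleBasis 𝔅) 𝔚 f) : IsOpen (Kset f) := by
  rw [isOpen_iff_forall_mem_open]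
  intro t ht
  obtain ⟨w, ⟨B', hB', rfl⟩, hyB', -⟩ :=
    hW.isBasis.exists_subset_of_mem_open (Set.mem_univ (f (1, t))) isOpen_univ
  have hBpos' := hW.isPoset B' hB'
  have hdata : ∀ s : Circle, ∃ (a b : ℝ) (B : OSet X), (0 < b - a ∧ b - a < 2 * Real.pi) ∧
      B ∈ 𝔅 ∧ (s ∈ (arcOSet a b).carrier ∧ t ∈ B.carrier) ∧
      (∀ p ∈ ((arcOSet a b).prod B).carrier, f p ∈ B'.carrier) ∧
      (∀ p q, ((arcOSet a b).prod B).le p q → B'.le (f p) (f q)) := by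
    intro s
    have hst : f (s, t) ∈ B'.carrier := by rw [ht s 1]; exact hyB'
    rcases hf (s, t) B' hB' hst with ⟨C, ⟨α, hα, B, hB, rfl⟩, hxC, hmap, hincr⟩
    rcases hα with ⟨a, b, h1, h2, rfl⟩
    exact ⟨a, b, B, ⟨h1, h2⟩, hB, ⟨hxC.1, hxC.2⟩, hmap, hincr⟩
  choose ca cb cB hab hcB hx hmap hincr using hdata
  have hcov : (Set.univ : Set Circle) ⊆ ⋃ s : Circle, (arcOSet (ca s) (cb s)).carrier :=
    fun s _ => Set.mem_iUnion.2 ⟨s, (hx s).1⟩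
  rcases isCompact_univ.elim_finite_subcover _ (fun s => arc_carrier_open _ _) hcov with ⟨F, hF⟩
  refine ⟨⋂ s ∈ F, (cB s).carrier,
    fun τ hτ => ?_,
    isOpen_biInter_finset (fun s _ => basis_carrier_open h𝔅 (hcB s)),
    Set.mem_iInter₂.2 fun s _ => (hx s).2⟩
  have hτmem : ∀ s ∈ F, τ ∈ (cB s).carrier := Set.mem_iInter₂.1 hτ
  have hmemB' : ∀ σ : Circle, f (σ, τ) ∈ B'.carrier := by
    intro σ
    rcases Set.mem_iUnion₂.1 (hF (Set.mem_univ σ)) with ⟨s, hsF, hσ⟩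
    exact hmap s (σ, τ) (Set.mk_mem_prod hσ (hτmem s hsF))
  have hR : ∀ x : ℝ, ∃ ε > 0, ∀ d : ℝ, 0 ≤ d → d ≤ ε →
      B'.le (f (Circle.exp x, τ)) (f (Circle.exp (x + d), τ)) := by
    intro x
    rcases Set.mem_iUnion₂.1 (hF (Set.mem_univ (Circle.exp x))) with ⟨s, hsF, hσ⟩
    rcases hσ with ⟨u, hu, hue⟩
    refine ⟨(cb s - u) / 2, by linarith [hu.2], ?_⟩
    intro d hd0 hd
    have h1 : u + d ∈ Set.Ioo (ca s) (cb s) := ⟨by linarith [hu.1], by linarith [hu.2]⟩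
    have hexp : Circle.exp (x + d) = Circle.exp (u + d) := by
      rcases Circle.exp_eq_exp.1 hue with ⟨k, hk⟩
      exact Circle.exp_eq_exp.2 ⟨-k, by push_cast; linarith⟩
    have h3 := hincr s (Circle.exp u, τ) (Circle.exp (u + d), τ)
      ⟨⟨u, hu, u + d, h1, by linarith, rfl, rfl⟩, (h𝔅.isPoset _ (hcB s)).2.1 τ (hτmem s hsF)⟩
    rw [hue] at h3
    rw [hexp]
    exact h3
  have hL : ∀ x : ℝ, ∃ ε > 0, ∀ d : ℝ, 0 ≤ d → d ≤ ε →
      B'.le (f (Circle.exp (x - d), τ)) (f (Circle.exp x, τ)) := by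
    intro x
    rcases Set.mem_iUnion₂.1 (hF (Set.mem_univ (Circle.exp x))) with ⟨s, hsF, hσ⟩
    rcases hσ with ⟨u, hu, hue⟩
    refine ⟨(u - ca s) / 2, by linarith [hu.1], ?_⟩
    intro d hd0 hd
    have h1 : u - d ∈ Set.Ioo (ca s) (cb s) := ⟨by linarith [hu.1], by linarith [hu.2]⟩
    have hexp : Circle.exp (x - d) = Circle.exp (u - d) := by
      rcases Circle.exp_eq_exp.1 hue with ⟨k, hk⟩
      exact Circle.exp_eq_exp.2 ⟨-k, by push_cast; linarith⟩
    have h3 := hincr s (Circle.exp (u - d), τ) (Circle.exp u, τ)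
      ⟨⟨u - d, h1, u, hu, by linarith, rfl, rfl⟩, (h𝔅.isPoset _ (hcB s)).2.1 τ (hτmem s hsF)⟩
    rw [hue] at h3
    rw [hexp]
    exact h3
  have hchain := chain_reflTransGen
    (fun σ σ' => B'.le (f (σ, τ)) (f (σ', τ))) hR hL
  have rtg_to_le : ∀ {p q : Circle},
      Relation.ReflTransGen (fun σ σ' => B'.le (f (σ, τ)) (f (σ', τ))) p q →
        B'.le (f (p, τ)) (f (q, τ)) := by
    intro p q h
    induction h with
    | refl => exact hBpos'.2.1 _ (hmemB' p)
    | tail _ h' ih => exact hBpos'.2.2.2 _ _ _ ih h'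
  have key : ∀ σ : Circle, f (σ, τ) = f (1, τ) := by
    intro σ
    obtain ⟨θ, rfl⟩ := exp_surj σ
    have hfl : (⌊θ / (2 * Real.pi)⌋ : ℝ) * (2 * Real.pi) ≤ θ :=
      (le_div_iff₀ two_pi_pos).1 (Int.floor_le _)
    have hce : θ ≤ (⌈θ / (2 * Real.pi)⌉ : ℝ) * (2 * Real.pi) :=
      (div_le_iff₀ two_pi_pos).1 (Int.le_ceil _)
    have h1 := hchain _ _ hfl
    have h2 := hchain _ _ hce
    rw [Circle.exp_int_mul_two_pi] at h1 h2
    exact hBpos'.2.2.1 _ _ (rtg_to_le h2) (rtg_to_le h1)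
  exact fun s s' => (key s).trans (key s').symm

end Main

end S15
namespace S15

section Main2

variable {X : Type u} [TopologicalSpace X] {𝔅 : Set (OSet X)} {O : Set X}

lemma UOSet_carrier (α : OSet Circle) (A : OSet X) :
    (UOSet O α A).carrier = USet O α.carrier A.carrier := rfl

lemma qO_locIncr (h𝔅 : IsOrderedBasis 𝔅) (hOopen : IsOpen O) :
    LocIncr (prodBasis dCircleBasis 𝔅) (XOBasis 𝔅 O) (qO O) := by
  rintro ⟨s, t⟩ C' hC' hmem
  rcases hC' with ⟨a, b, h1, h2, A, hA, rfl⟩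
  rw [UOSet_carrier, qO_mem_USet] at hmem
  by_cases htO : t ∈ O
  · -- collapse case: shrink the X-part into O, arbitrary arc
    have htA : t ∈ A.carrier := by
      rcases hmem with ⟨_, h⟩ | ⟨h, _⟩
      · exact h
      · exact absurd htO h
    rcases hA t htA with ⟨B₁, hB₁, htB₁, hlax⟩
    rcases basis_shrink h𝔅 hB₁ htB₁ hOopen htO with ⟨B₃, hB₃, htB₃, hsub₃, hle₃⟩
    obtain ⟨θ, hθ⟩ := exp_surj s
    refine ⟨(arcOSet (θ - 1) (θ + 1)).prod B₃,
      ⟨arcOSet (θ - 1) (θ + 1),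
        arc_mem_dCircleBasis (by linarith) (by linarith [two_lt_two_pi]), B₃, hB₃, rfl⟩,
      Set.mk_mem_prod (hθ ▸ ⟨θ, ⟨by linarith, by linarith⟩, rfl⟩) htB₃, ?_, ?_⟩
    · intro p hp
      have hpO : p.2 ∈ O := (hsub₃ hp.2).2
      rw [UOSet_carrier, qO_mem_USet]
      exact Or.inl ⟨hpO, hlax.1 (hsub₃ hp.2).1⟩
    · intro p q hle
      have hpO : p.2 ∈ O := (hsub₃ ((h𝔅.isPoset B₃ hB₃).1 _ _ hle.2).1).2
      have hqO : q.2 ∈ O := (hsub₃ ((h𝔅.isPoset B₃ hB₃).1 _ _ hle.2).2).2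
      refine Relation.TransGen.single
        ⟨(Circle.exp ((a + b) / 2), p.2), (Circle.exp ((a + b) / 2), q.2),
          arc_refl ⟨(a + b) / 2, arc_nonempty h1, rfl⟩,
          hlax.2 _ _ (hle₃ _ _ hle.2), ?_, ?_⟩
      · exact (qO_pos hpO _).trans ((qO_pos hpO p.1).symm)
      · exact (qO_pos hqO _).trans ((qO_pos hqO q.1).symm)
  · -- free case
    obtain ⟨hsα, htA⟩ : s ∈ (arcOSet a b).carrier ∧ t ∈ A.carrier := by
      rcases hmem with ⟨h, _⟩ | ⟨_, h, h'⟩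
      · exact absurd h htO
      · exact ⟨h, h'⟩
    rcases hA t htA with ⟨B₁, hB₁, htB₁, hlax⟩
    refine ⟨(arcOSet a b).prod B₁,
      ⟨arcOSet a b, arc_mem_dCircleBasis h1 h2, B₁, hB₁, rfl⟩,
      Set.mk_mem_prod hsα htB₁, ?_, ?_⟩
    · intro p hp
      rw [UOSet_carrier, qO_mem_USet]
      by_cases hpO : p.2 ∈ O
      · exact Or.inl ⟨hpO, hlax.1 hp.2⟩
      · exact Or.inr ⟨hpO, hp.1, hlax.1 hp.2⟩
    · intro p q hle
      exact Relation.TransGen.single ⟨p, q, hle.1, hlax.2 _ _ hle.2, rfl, rfl⟩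

/-- The induced map `X_O → W` from a map collapsing circles over `O`. -/
noncomputable def hmap {X : Type u} {O : Set X} {W : Type w} (f : Circle × X → W) : XO X O → W :=
  Sum.elim (fun t => f (1, (t : X))) (fun p => f (p.1, (p.2 : X)))

lemma hmap_qO {W : Type w} {f : Circle × X → W} (hK : O ⊆ Kset f) (x : Circle × X) :
    hmap f (qO O x) = f x := by
  obtain ⟨s, t⟩ := x
  by_cases h : t ∈ O
  · rw [qO_pos h]
    exact hK h 1 s
  · rw [qO_neg h]; rfl

lemma hmap_locIncr {W : Type w} {𝔚 : Set (OSet W)} (h𝔅 : IsOrderedBasis 𝔅)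
    (hW : ∀ B' ∈ 𝔚, B'.IsPoset) {f : Circle × X → W}
    (hf : LocIncr (prodBasis dCircleBasis 𝔅) 𝔚 f)
    (hK : O ⊆ Kset f) : LocIncr (goodBasis 𝔅 O) 𝔚 (hmap f) := by
  intro u B' hB' hmem
  have hBpos' := hW B' hB'
  obtain ⟨x, rfl⟩ := qO_surj u
  rcases hf x B' hB' (by rw [← hmap_qO hK x]; exact hmem) with
    ⟨C, ⟨α, hα, B, hB, rfl⟩, hxC, hmap', hincr⟩
  obtain ⟨a, b, h1, h2, rfl⟩ := hα
  refine ⟨UOSet O (arcOSet a b) B, ⟨a, b, h1, h2, B, hB, rfl⟩, ?_, ?_, ?_⟩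
  · rw [UOSet_carrier, qO_mem_USet]
    by_cases h : x.2 ∈ O
    · exact Or.inl ⟨h, hxC.2⟩
    · exact Or.inr ⟨h, hxC.1, hxC.2⟩
  · rintro w hw
    cases w with
    | inl t' =>
      have ht' := inl_mem_USet.1 hw
      have hval : f (Circle.exp ((a + b) / 2), (t' : X)) ∈ B'.carrier :=
        hmap' _ (Set.mk_mem_prod ⟨(a + b) / 2, arc_nonempty h1, rfl⟩ ht')
      have heq : hmap (O := O) f (Sum.inl t') = f (Circle.exp ((a + b) / 2), (t' : X)) :=
        hK t'.2 1 _
      rw [heq]; exact hval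
    | inr q =>
      have hq := inr_mem_USet.1 hw
      exact hmap' _ (Set.mk_mem_prod hq.1 hq.2)
  · intro p q h
    have step : ∀ {p q : XO X O}, leOne O (arcOSet a b) B p q →
        B'.le (hmap f p) (hmap f q) := by
      rintro p q ⟨y, y', hy1, hy2, rfl, rfl⟩
      rw [hmap_qO hK y, hmap_qO hK y']
      exact hincr y y' ⟨hy1, hy2⟩
    induction h with
    | single h' => exact step h'
    | tail _ h' ih => exact hBpos'.2.2.2 _ _ _ ih (step h')

end Main2

end S15
namespace S15

section Assemble

variable {X : Type u} [TopologicalSpace X] [T2Space X]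

lemma exp_pi_ne_one : Circle.exp Real.pi ≠ 1 := by
  intro h
  rcases Circle.exp_eq_one.1 h with ⟨n, hn⟩
  have hπ := Real.pi_ne_zero
  have h2 : ((2 * n - 1 : ℤ) : ℝ) * Real.pi = 0 := by push_cast; linarith
  rcases mul_eq_zero.1 h2 with h3 | h3
  · have h4 : (2 * n - 1 : ℤ) = 0 := by exact_mod_cast h3
    omega
  · exact hπ h3

lemma isCoeq_general {𝔅 : Set (OSet X)} (h𝔅 : IsOrderedBasis 𝔅) (star : X)
    {O : Set X} (hO : IsClopen O) (hstar : star ∈ O)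
    (hmin : ∀ U : Set X, IsClopen U → star ∈ U → O ⊆ U)
    (ℭ : Set (OSet (XO X O))) (hsub : goodBasis 𝔅 O ⊆ ℭ) (hℭ : ℭ ⊆ XOBasis 𝔅 O) :
    IsCoeqIn (fun Y : LocOrdSpace.{u} => @T2Space Y.carrier Y.top)
      (prodBasis dCircleBasis 𝔅) ℭ
      (fun s : Circle => (s, star)) (fun _ : Circle => ((1 : Circle), star)) (qO O) := by
  refine ⟨locIncr_anti_target hℭ (qO_locIncr h𝔅 hO.2), ?_, ?_⟩
  · funext s
    show qO O (s, star) = qO O (1, star)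
    rw [qO_pos hstar, qO_pos hstar]
  · intro Y hY f hf hcoeq
    letI := Y.top
    haveI := hY
    have hstarK : star ∈ Kset f := fun s s' =>
      (congrFun hcoeq s).trans (congrFun hcoeq s').symm
    have hKclopen : IsClopen (Kset f) :=
      ⟨Kset_closed (locIncr_continuous h𝔅 Y.isBasis.isBasis hf),
        Kset_open h𝔅 Y.isBasis hf⟩
    have hK : O ⊆ Kset f := hmin _ hKclopen hstarK
    refine ⟨hmap f, ⟨locIncr_mono_source hsub
      (hmap_locIncr h𝔅 Y.isBasis.isPoset hf hK), funext fun x => (hmap_qO hK x).symm⟩, ?_⟩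
    rintro h' ⟨-, heq⟩
    funext u
    obtain ⟨x, rfl⟩ := qO_surj u
    calc h' (qO O x) = f x := (congrFun heq x).symm
      _ = hmap f (qO O x) := (hmap_qO hK x).symm

end Assemble

end S15

/-- In the category of locally ordered spaces with Hausdorff
underlying topology, the pair `i⋆, c⋆ : S¹ → S⃗¹ × X` (for `X` Hausdorff) has a
coequalizer iff the family of clopen neighbourhoods of `⋆` has a smallest
element `O`; in that case `q_O` is the coequalizer. -/
theorem stmt15 {X : Type u} [TopologicalSpace X] [T2Space X] (𝔅 : Set (OSet X))
    (h𝔅 : IsOrderedBasis 𝔅) (star : X) :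
    ((∃ (C : LocOrdSpace.{u}) (g : Circle × X → C.carrier),
        (@T2Space C.carrier C.top) ∧
        IsCoeqIn (fun Y : LocOrdSpace.{u} => @T2Space Y.carrier Y.top)
          (prodBasis dCircleBasis 𝔅) C.basis
          (fun s : Circle => (s, star)) (fun _ : Circle => ((1 : Circle), star)) g) ↔
      ∃ O : Set X, (IsClopen O ∧ star ∈ O) ∧
        ∀ U : Set X, IsClopen U → star ∈ U → O ⊆ U) ∧
    ∀ O : Set X, IsClopen O → star ∈ O → (∀ U : Set X, IsClopen U → star ∈ U → O ⊆ U) →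
      T2Space (XO X O) ∧
      IsCoeqIn (fun Y : LocOrdSpace.{u} => @T2Space Y.carrier Y.top)
        (prodBasis dCircleBasis 𝔅) (XOBasis 𝔅 O)
        (fun s : Circle => (s, star)) (fun _ : Circle => ((1 : Circle), star)) (qO O) := by
  constructor
  · constructor
    · rintro ⟨C, g, hT2C, hg, hgc, huniv⟩
      letI := C.top
      haveI := hT2C
      have hKclopen : IsClopen (Kset g) :=
        ⟨S15.Kset_closed (S15.locIncr_continuous h𝔅 C.isBasis.isBasis hg),
          S15.Kset_open h𝔅 C.isBasis hg⟩
      have hstarK : star ∈ Kset g := fun s s' =>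
        (congrFun hgc s).trans (congrFun hgc s').symm
      refine ⟨Kset g, ⟨hKclopen, hstarK⟩, ?_⟩
      intro U hU hstarU
      haveI hT2U : T2Space (XO X U) := S15.XO_t2 hU
      obtain ⟨h, ⟨-, hfac⟩, -⟩ := huniv
        ⟨XO X U, XO.topology U, S15.goodBasis 𝔅 U, S15.goodBasis_isOrderedBasis h𝔅 hU⟩
        hT2U (qO U)
        (S15.locIncr_anti_target S15.goodBasis_subset_XOBasis (S15.qO_locIncr h𝔅 hU.2))
        (by funext s
            show qO U (s, star) = qO U (1, star)
            rw [S15.qO_pos hstarU, S15.qO_pos hstarU])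
      intro t htK
      by_contra htU
      have h2 : qO U (Circle.exp Real.pi, t) = qO U (1, t) := by
        calc qO U (Circle.exp Real.pi, t)
            = h (g (Circle.exp Real.pi, t)) := congrFun hfac _
          _ = h (g (1, t)) := by rw [htK (Circle.exp Real.pi) 1]
          _ = qO U (1, t) := (congrFun hfac _).symm
      rw [S15.qO_neg htU, S15.qO_neg htU] at h2
      exact S15.exp_pi_ne_one (Prod.mk.inj (Sum.inr.inj h2)).1
    · rintro ⟨O, ⟨hO, hstar⟩, hmin⟩
      exact ⟨⟨XO X O, XO.topology O, S15.goodBasis 𝔅 O, S15.goodBasis_isOrderedBasis h𝔅 hO⟩,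
        qO O, S15.XO_t2 hO,
        S15.isCoeq_general h𝔅 star hO hstar hmin _ subset_rfl S15.goodBasis_subset_XOBasis⟩
  · intro O hO hstar hmin
    exact ⟨S15.XO_t2 hO,
      S15.isCoeq_general h𝔅 star hO hstar hmin _ S15.goodBasis_subset_XOBasis subset_rfl⟩
end

section
/- Let Z be the zebra cylinder and let f : Z → Y be a locally increasing map to a locally ordered space Y such that f ∘ i₀ = f ∘ c₀. Then there exists n ∈ ℕ such that for all m ≥ n, the interval I(m) is contained in K(f) := {t ∈ [0,1] : f(s,t) = f(s',t) for all s, s' ∈ S¹}. -/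
universe u v w v'

/-! ## The zebra cylinder -/

/-- A basic ordered subset `α × O` of the zebra cylinder `S¹ × [0,1]`, for the
sequence `d`: `(s,u) ⪯ (s',u')` iff `u = u'` and (`s = s'`, or else `s ≤_α s'`
and `u` belongs to `I(n)` for some `n ∈ ℕ ∪ {∞}`). -/
def zebraOSet (d : ℕ → ℝ) (a b : ℝ) (O : Set unitInterval) :
    OSet (Circle × unitInterval) where
  carrier := (arcOSet a b).carrier ×ˢ O
  le p q :=
    p ∈ (arcOSet a b).carrier ×ˢ O ∧ q ∈ (arcOSet a b).carrier ×ˢ O ∧ p.2 = q.2 ∧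
      (p.1 = q.1 ∨ ((arcOSet a b).le p.1 q.1 ∧
        ((p.2 : ℝ) = 0 ∨ ∃ n : ℕ, (p.2 : ℝ) ∈ Set.Icc (d (2 * n + 1)) (d (2 * n)))))

/-- The strict ordered basis of the zebra cylinder. -/
def zebraBasis (d : ℕ → ℝ) : Set (OSet (Circle × unitInterval)) :=
  {B | ∃ a b : ℝ, 0 < b - a ∧ b - a < 2 * Real.pi ∧
    ∃ O : Set unitInterval, IsOpen O ∧ B = zebraOSet d a b O}

/-- Let `Z` be the zebra cylinder (for a strictly decreasing
sequence `d` in `[0,1]` with infimum `0`) and `f : Z → Y` a locally increasing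
map with `f ∘ i₀ = f ∘ c₀`. Then there is `n` such that for all `m ≥ n`,
`I(m) ⊆ K(f)`. -/
theorem stmt16 {Y : Type v} [TopologicalSpace Y] (𝔅' : Set (OSet Y))
    (h𝔅' : IsOrderedBasis 𝔅')
    (d : ℕ → ℝ) (hd : StrictAnti d) (hd01 : ∀ n, d n ∈ Set.Icc (0 : ℝ) 1)
    (hinf : ⨅ n, d n = 0)
    (f : Circle × unitInterval → Y) (hf : LocIncr (zebraBasis d) 𝔅' f)
    (heq : ∀ s : Circle, f (s, (0 : unitInterval)) = f ((1 : Circle), (0 : unitInterval))) :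
    ∃ n : ℕ, ∀ m ≥ n, ∀ t : unitInterval,
      (t : ℝ) ∈ Set.Icc (d (2 * m + 1)) (d (2 * m)) → t ∈ Kset f := by
  classical
  have hpi : (0:ℝ) < 2 * Real.pi := by positivity
  -- choose a basic ordered set B' of Y containing the common value f (1,0)
  obtain ⟨V, hV, hy₀V, -⟩ := h𝔅'.isBasis.exists_subset_of_mem_open
    (Set.mem_univ (f ((1:Circle), (0:unitInterval)))) isOpen_univ
  obtain ⟨B', hB', rfl⟩ := hV
  -- key local datum at each real x
  have key : ∀ x : ℝ, ∃ ε > (0:ℝ), ∃ O : Set unitInterval, IsOpen O ∧ (0:unitInterval) ∈ O ∧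
      ∀ t ∈ O, (∀ y : ℝ, |y - x| < ε → f (Circle.exp y, t) ∈ B'.carrier) ∧
        (((t:ℝ) = 0 ∨ ∃ n : ℕ, (t:ℝ) ∈ Set.Icc (d (2*n+1)) (d (2*n))) →
          ∀ y z : ℝ, |y - x| < ε → |z - x| < ε → y ≤ z →
            B'.le (f (Circle.exp y, t)) (f (Circle.exp z, t))) := by
    intro x
    have hmem : f (Circle.exp x, (0:unitInterval)) ∈ B'.carrier := by rw [heq]; exact hy₀V
    obtain ⟨B, hB, hxB, hmaps, hincr⟩ := hf (Circle.exp x, (0:unitInterval)) B' hB' hmem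
    obtain ⟨a, b, hab1, hab2, O, hO, rfl⟩ := hB
    obtain ⟨⟨x', hx', hx'e⟩, h0O⟩ := hxB
    obtain ⟨k, hk⟩ := Circle.exp_eq_exp.mp hx'e
    have hkk : (k:ℝ) * (2*Real.pi) = x' - x := by linarith
    refine ⟨min (x' - a) (b - x'),
      lt_min (sub_pos.mpr hx'.1) (sub_pos.mpr hx'.2), O, hO, h0O, ?_⟩
    have harc : ∀ y : ℝ, |y - x| < min (x' - a) (b - x') →
        (y + (k:ℝ) * (2 * Real.pi) ∈ Set.Ioo a b ∧
         Circle.exp (y + (k:ℝ) * (2 * Real.pi)) = Circle.exp y) := by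
      intro y hy
      have h1 : |y - x| < x' - a := lt_of_lt_of_le hy (min_le_left _ _)
      have h2 : |y - x| < b - x' := lt_of_lt_of_le hy (min_le_right _ _)
      rw [abs_lt] at h1 h2
      refine ⟨⟨by linarith, by linarith⟩, Circle.exp_eq_exp.mpr ⟨k, rfl⟩⟩
    intro t ht
    constructor
    · intro y hy
      obtain ⟨hyIoo, hye⟩ := harc y hy
      exact hmaps (Circle.exp y, t) ⟨⟨_, hyIoo, hye⟩, ht⟩
    · intro hstripe y z hy hz hyz
      obtain ⟨hyIoo, hye⟩ := harc y hy
      obtain ⟨hzIoo, hze⟩ := harc z hz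
      refine hincr (Circle.exp y, t) (Circle.exp z, t) ?_
      exact ⟨⟨⟨_, hyIoo, hye⟩, ht⟩, ⟨⟨_, hzIoo, hze⟩, ht⟩, rfl,
        Or.inr ⟨⟨_, hyIoo, _, hzIoo, by linarith, hye, hze⟩, hstripe⟩⟩
  choose ε hε O hOopen hO0 hOprop using key
  -- finite subcover of [0, 2π]
  obtain ⟨F, hF⟩ := (isCompact_Icc (a := (0:ℝ)) (b := 2*Real.pi)).elim_finite_subcover
    (fun x : ℝ => Metric.ball x (ε x)) (fun x => Metric.isOpen_ball)
    (fun y _ => Set.mem_iUnion.mpr ⟨y, Metric.mem_ball_self (hε y)⟩)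
  have hF' : Set.Icc (0:ℝ) (2*Real.pi) ⊆ ⋃ i : F, Metric.ball (i:ℝ) (ε i) := by
    intro y hy
    obtain ⟨x, hxF, hx⟩ := Set.mem_iUnion₂.mp (hF hy)
    exact Set.mem_iUnion.mpr ⟨⟨x, hxF⟩, hx⟩
  obtain ⟨δ, hδ, hleb⟩ := lebesgue_number_lemma_of_metric isCompact_Icc
    (fun i : F => Metric.isOpen_ball) hF'
  -- intersection of the finitely many O's
  have hOallOpen : IsOpen (⋂ x ∈ F, O x) := isOpen_biInter_finset (fun x _ => hOopen x)
  have hOall0 : (0:unitInterval) ∈ ⋂ x ∈ F, O x :=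
    Set.mem_biInter (fun x _ => hO0 x)
  obtain ⟨r, hr, hball⟩ := Metric.isOpen_iff.mp hOallOpen _ hOall0
  -- d tends to 0
  have hdten : Filter.Tendsto d Filter.atTop (nhds 0) := by
    have h := tendsto_atTop_ciInf hd.antitone ⟨0, by rintro y ⟨n, rfl⟩; exact (hd01 n).1⟩
    rwa [hinf] at h
  obtain ⟨n₀, hn₀⟩ := Filter.eventually_atTop.mp (hdten.eventually_lt_const hr)
  refine ⟨n₀, fun m hm t ht => ?_⟩
  -- t lies in all the O x for x ∈ F
  have htO : t ∈ ⋂ x ∈ F, O x := by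
    apply hball
    have h1 : (t:ℝ) < r := lt_of_le_of_lt ht.2 (hn₀ (2*m) (by omega))
    have h0 : (0:ℝ) ≤ (t:ℝ) := t.2.1
    rw [Metric.mem_ball, Subtype.dist_eq, Real.dist_eq]
    simpa [abs_of_nonneg h0] using h1
  have htOx : ∀ x ∈ F, t ∈ O x := fun x hx => Set.mem_iInter₂.mp htO x hx
  have hstripe : (t:ℝ) = 0 ∨ ∃ n : ℕ, (t:ℝ) ∈ Set.Icc (d (2*n+1)) (d (2*n)) :=
    Or.inr ⟨m, ht⟩
  -- membership everywhere
  have hcov : ∀ y ∈ Set.Icc (0:ℝ) (2*Real.pi), ∃ x ∈ F, |y - x| < ε x := by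
    intro y hy
    obtain ⟨x, hxF, hx⟩ := Set.mem_iUnion₂.mp (hF hy)
    exact ⟨x, hxF, by rwa [Metric.mem_ball, Real.dist_eq] at hx⟩
  have memAll : ∀ y : ℝ, f (Circle.exp y, t) ∈ B'.carrier := by
    intro y
    have h1 : 0 ≤ y - ⌊y / (2*Real.pi)⌋ * (2*Real.pi) := Int.sub_floor_div_mul_nonneg y hpi
    have h2 : y - ⌊y / (2*Real.pi)⌋ * (2*Real.pi) < 2*Real.pi := Int.sub_floor_div_mul_lt y hpi
    obtain ⟨x, hxF, hx⟩ := hcov (y - ⌊y / (2*Real.pi)⌋ * (2*Real.pi)) ⟨h1, h2.le⟩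
    have h3 := (hOprop x t (htOx x hxF)).1 _ hx
    rwa [show Circle.exp (y - ⌊y / (2*Real.pi)⌋ * (2*Real.pi)) = Circle.exp y from
      Circle.exp_eq_exp.mpr ⟨-⌊y / (2*Real.pi)⌋, by push_cast; ring⟩] at h3
  -- a small step is increasing
  have step : ∀ y z : ℝ, y ≤ z → z - y < δ →
      B'.le (f (Circle.exp y, t)) (f (Circle.exp z, t)) := by
    intro y z hyz hlt
    set k : ℤ := ⌊y / (2*Real.pi)⌋ with hkdef
    have h1 : 0 ≤ y - k * (2*Real.pi) := Int.sub_floor_div_mul_nonneg y hpi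
    have h2 : y - k * (2*Real.pi) < 2*Real.pi := Int.sub_floor_div_mul_lt y hpi
    obtain ⟨i, hi⟩ := hleb (y - k * (2*Real.pi)) ⟨h1, h2.le⟩
    have hyi := hi (Metric.mem_ball_self hδ)
    have hzi := hi (show z - k * (2*Real.pi) ∈ Metric.ball (y - k * (2*Real.pi)) δ by
      rw [Metric.mem_ball, Real.dist_eq, abs_of_nonneg (by linarith)]
      linarith)
    rw [Metric.mem_ball, Real.dist_eq] at hyi hzi
    have h3 := (hOprop i t (htOx i i.2)).2 hstripe _ _ hyi hzi (by linarith)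
    rwa [show Circle.exp (y - k * (2*Real.pi)) = Circle.exp y from
        Circle.exp_eq_exp.mpr ⟨-k, by push_cast; ring⟩,
      show Circle.exp (z - k * (2*Real.pi)) = Circle.exp z from
        Circle.exp_eq_exp.mpr ⟨-k, by push_cast; ring⟩] at h3
  obtain ⟨hP1, hP2, hP3, hP4⟩ := h𝔅'.isPoset B' hB'
  -- chains of small steps
  have chain : ∀ n : ℕ, ∀ y z : ℝ, y ≤ z → z - y ≤ n * (δ/2) →
      B'.le (f (Circle.exp y, t)) (f (Circle.exp z, t)) := by
    intro n
    induction n with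
    | zero =>
      intro y z hyz hle
      have hzy : z ≤ y := by simpa [sub_nonpos] using hle
      have : y = z := le_antisymm hyz hzy
      subst this
      exact hP2 _ (memAll y)
    | succ n ih =>
      intro y z hyz hle
      by_cases h : z - y ≤ n * (δ/2)
      · exact ih y z hyz h
      · have hyw : y ≤ max y (z - δ/2) := le_max_left _ _
        have hwz : max y (z - δ/2) ≤ z := max_le hyz (by linarith)
        have hle' : z - y ≤ ((n:ℝ)+1) * (δ/2) := by push_cast at hle; linarith
        have h1 : max y (z - δ/2) - y ≤ (n:ℝ) * (δ/2) := by
          rcases le_total (z - δ/2) y with h' | h'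
          · rw [max_eq_left h']
            have : (0:ℝ) ≤ (n:ℝ) * (δ/2) := by positivity
            linarith
          · rw [max_eq_right h']; linarith
        have h2 : z - max y (z - δ/2) < δ := by
          have := le_max_right y (z - δ/2)
          linarith
        exact hP4 _ _ _ (ih y _ hyw h1) (step _ z hwz h2)
  have full : ∀ y z : ℝ, y ≤ z → B'.le (f (Circle.exp y, t)) (f (Circle.exp z, t)) := by
    intro y z hyz
    obtain ⟨n, hn⟩ := exists_nat_ge ((z - y) / (δ/2))
    refine chain n y z hyz ?_
    rw [div_le_iff₀ (by positivity)] at hn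
    linarith
  -- conclude constancy at level t
  intro s s'
  obtain ⟨u, hu⟩ : ∃ u : ℝ, Circle.exp u = s := ⟨_, Circle.exp_arg s⟩
  obtain ⟨v, hv⟩ : ∃ v : ℝ, Circle.exp v = s' := ⟨_, Circle.exp_arg s'⟩
  have hj : u - v ≤ (⌈(u - v) / (2*Real.pi)⌉ : ℝ) * (2*Real.pi) := by
    have := Int.le_ceil ((u - v) / (2*Real.pi))
    rw [div_le_iff₀ hpi] at this
    linarith [mul_le_mul_of_nonneg_right this (le_of_lt hpi)]
  set v' : ℝ := v + (⌈(u - v) / (2*Real.pi)⌉ : ℝ) * (2*Real.pi) with hv'def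
  have huv' : u ≤ v' := by rw [hv'def]; linarith
  obtain ⟨N, hN⟩ := exists_nat_ge ((v' - u) / (2*Real.pi))
  have hN' : v' ≤ u + (N:ℝ) * (2*Real.pi) := by
    rw [div_le_iff₀ hpi] at hN
    linarith
  have ev' : Circle.exp v' = Circle.exp v := Circle.exp_eq_exp.mpr ⟨_, rfl⟩
  have eN : Circle.exp (u + (N:ℝ) * (2*Real.pi)) = Circle.exp u :=
    Circle.exp_eq_exp.mpr ⟨(N:ℤ), by push_cast; ring⟩
  have le1 := full u v' huv'
  have le2 := full v' (u + (N:ℝ) * (2*Real.pi)) hN'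
  rw [ev'] at le1
  rw [ev', eN] at le2
  rw [← hu, ← hv]
  exact hP3 _ _ le1 le2
end

section
/- The pair of locally increasing maps i₀, c₀ : S¹ → Z into the zebra cylinder Z does not have a coequalizer in the category of locally ordered spaces and locally increasing maps. -/
universe u v w v'

namespace Stmt17Aux

open Set

/-- Injectivity of `Circle.exp` within distance `2π`. -/
lemma exp_inj {x y : ℝ} (h : |x - y| < 2 * Real.pi)
    (he : Circle.exp x = Circle.exp y) : x = y := by
  obtain ⟨m, hm⟩ := Circle.exp_eq_exp.mp he
  rcases eq_or_ne m 0 with h0 | h0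
  · simpa [h0] using hm
  · exfalso
    have h1 : (1:ℝ) ≤ |(m:ℝ)| := by exact_mod_cast Int.one_le_abs h0
    have h2 : (0:ℝ) < 2 * Real.pi := by positivity
    have h3 : |x - y| = |(m:ℝ)| * (2 * Real.pi) := by
      have hxy : x - y = (m:ℝ) * (2 * Real.pi) := by linarith
      rw [hxy, abs_mul, abs_of_pos h2]
    nlinarith [abs_nonneg ((m:ℝ))]

lemma arc_antisymm {a b : ℝ} (hab : b - a < 2 * Real.pi) {p q : Circle}
    (h1 : (arcOSet a b).le p q) (h2 : (arcOSet a b).le q p) : p = q := by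
  obtain ⟨x, hx, y, hy, hxy, hxp, hyq⟩ := h1
  obtain ⟨z, hz, w, hw, hzw, hzq, hwp⟩ := h2
  have hzy : z = y := exp_inj (by rw [abs_lt]; cases hz; cases hy; constructor <;> linarith)
    (hzq.trans hyq.symm)
  have hwx : w = x := exp_inj (by rw [abs_lt]; cases hw; cases hx; constructor <;> linarith)
    (hwp.trans hxp.symm)
  have : x = y := le_antisymm hxy (by rw [← hzy, ← hwx] at hxy ⊢; linarith)
  rw [← hxp, ← hyq, this]

lemma arc_trans {a b : ℝ} (hab : b - a < 2 * Real.pi) {p q r : Circle}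
    (h1 : (arcOSet a b).le p q) (h2 : (arcOSet a b).le q r) : (arcOSet a b).le p r := by
  obtain ⟨x, hx, y, hy, hxy, hxp, hyq⟩ := h1
  obtain ⟨z, hz, w, hw, hzw, hzq, hwr⟩ := h2
  have hzy : z = y := exp_inj (by rw [abs_lt]; cases hz; cases hy; constructor <;> linarith)
    (hzq.trans hyq.symm)
  exact ⟨x, hx, w, hw, by linarith, hxp, hwr⟩

/-- Intersections of proper arcs contain proper arcs around each of their points,
compatibly with the orders. -/
lemma arc_inter {a b a' b' : ℝ} (h2 : b - a < 2 * Real.pi) {s : Circle}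
    (hs : s ∈ (arcOSet a b).carrier) (hs' : s ∈ (arcOSet a' b').carrier) :
    ∃ a'' b'' : ℝ, 0 < b'' - a'' ∧ b'' - a'' < 2 * Real.pi ∧
      s ∈ (arcOSet a'' b'').carrier ∧
      (arcOSet a'' b'').carrier ⊆ (arcOSet a b).carrier ∩ (arcOSet a' b').carrier ∧
      ∀ p q, (arcOSet a'' b'').le p q → (arcOSet a b).le p q ∧ (arcOSet a' b').le p q := by
  obtain ⟨x, hx, hxs⟩ := hs
  obtain ⟨x', hx', hxs'⟩ := hs'
  obtain ⟨m, hm⟩ := Circle.exp_eq_exp.mp (hxs.trans hxs'.symm)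
  refine ⟨max a (a' + m * (2 * Real.pi)), min b (b' + m * (2 * Real.pi)), ?_, ?_, ?_, ?_, ?_⟩
  · have hxmem : max a (a' + m * (2 * Real.pi)) < x ∧ x < min b (b' + m * (2 * Real.pi)) := by
      constructor
      · exact max_lt hx.1 (by cases hx'; linarith)
      · exact lt_min hx.2 (by cases hx'; linarith)
    linarith [hxmem.1, hxmem.2]
  · have := le_max_left a (a' + m * (2 * Real.pi))
    have := min_le_left b (b' + m * (2 * Real.pi))
    linarith
  · exact ⟨x, ⟨max_lt hx.1 (by cases hx'; linarith), lt_min hx.2 (by cases hx'; linarith)⟩, hxs⟩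
  · rintro t ⟨y, hy, hys⟩
    have hy1 : y ∈ Set.Ioo a b := ⟨lt_of_le_of_lt (le_max_left _ _) hy.1,
      lt_of_lt_of_le hy.2 (min_le_left _ _)⟩
    have hy2 : y - m * (2 * Real.pi) ∈ Set.Ioo a' b' := by
      constructor
      · have := lt_of_le_of_lt (le_max_right _ _) hy.1; linarith
      · have := lt_of_lt_of_le hy.2 (min_le_right _ _); linarith
    have hey : Circle.exp (y - m * (2 * Real.pi)) = Circle.exp y := by
      apply Circle.exp_eq_exp.mpr ⟨-m, by push_cast; ring⟩
    exact ⟨⟨y, hy1, hys⟩, ⟨y - m * (2 * Real.pi), hy2, hey.trans hys⟩⟩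
  · rintro p q ⟨y, hy, z, hz, hyz, hyp, hzq⟩
    have hy1 : y ∈ Set.Ioo a b := ⟨lt_of_le_of_lt (le_max_left _ _) hy.1,
      lt_of_lt_of_le hy.2 (min_le_left _ _)⟩
    have hz1 : z ∈ Set.Ioo a b := ⟨lt_of_le_of_lt (le_max_left _ _) hz.1,
      lt_of_lt_of_le hz.2 (min_le_left _ _)⟩
    have hy2 : y - m * (2 * Real.pi) ∈ Set.Ioo a' b' := by
      constructor
      · have := lt_of_le_of_lt (le_max_right _ _) hy.1; linarith
      · have := lt_of_lt_of_le hy.2 (min_le_right _ _); linarith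
    have hz2 : z - m * (2 * Real.pi) ∈ Set.Ioo a' b' := by
      constructor
      · have := lt_of_le_of_lt (le_max_right _ _) hz.1; linarith
      · have := lt_of_lt_of_le hz.2 (min_le_right _ _); linarith
    refine ⟨⟨y, hy1, z, hz1, hyz, hyp, hzq⟩,
      ⟨y - m * (2 * Real.pi), hy2, z - m * (2 * Real.pi), hz2, by linarith, ?_, ?_⟩⟩
    · exact (Circle.exp_eq_exp.mpr ⟨-m, by push_cast; ring⟩ : _).trans hyp
    · exact (Circle.exp_eq_exp.mpr ⟨-m, by push_cast; ring⟩ : _).trans hzq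

end Stmt17Aux
namespace Stmt17Aux

/-- Local-to-global chaining along a real interval. -/
lemma chain {P : Type*} (le : P → P → Prop) (htrans : ∀ {p q r}, le p q → le q r → le p r)
    (G : ℝ → P) {T : ℝ}
    (cover : ∀ z ∈ Set.Icc (0:ℝ) T, ∃ l r : ℝ, z ∈ Set.Ioo l r ∧
      ∀ x y, x ∈ Set.Ioo l r → y ∈ Set.Ioo l r → x ≤ y → le (G x) (G y)) :
    ∀ x y, 0 ≤ x → x ≤ y → y ≤ T → le (G x) (G y) := by
  intro x y hx hxy hyT
  set S := {z | z ∈ Set.Icc x y ∧ le (G x) (G z)} with hS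
  have hxI : x ∈ Set.Icc 0 T := ⟨hx, le_trans hxy hyT⟩
  obtain ⟨l0, r0, hxlr, hloc0⟩ := cover x hxI
  have hxx : le (G x) (G x) := hloc0 x x hxlr hxlr le_rfl
  have hxS : x ∈ S := ⟨⟨le_rfl, hxy⟩, hxx⟩
  have hne : S.Nonempty := ⟨x, hxS⟩
  have hbdd : BddAbove S := ⟨y, fun z hz => hz.1.2⟩
  set M := sSup S with hM
  have hMmem : M ∈ Set.Icc x y := ⟨le_csSup hbdd hxS, csSup_le hne (fun z hz => hz.1.2)⟩
  have hMI : M ∈ Set.Icc 0 T := ⟨le_trans hx hMmem.1, le_trans hMmem.2 hyT⟩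
  obtain ⟨l, r, hMlr, hloc⟩ := cover M hMI
  obtain ⟨z, hzS, hlz⟩ := exists_lt_of_lt_csSup hne hMlr.1
  have hzM : z ≤ M := le_csSup hbdd hzS
  have hzlr : z ∈ Set.Ioo l r := ⟨hlz, lt_of_le_of_lt hzM hMlr.2⟩
  have hMS : le (G x) (G M) := htrans hzS.2 (hloc z M hzlr hMlr hzM)
  by_cases hMy : y ≤ M
  · have hMyeq : M = y := le_antisymm hMmem.2 hMy
    exact hMyeq ▸ hMS
  · push_neg at hMy
    set z' := min y ((M + r)/2) with hz'
    have hz'M : M < z' := lt_min hMy (by cases hMlr; linarith)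
    have hz'lr : z' ∈ Set.Ioo l r := ⟨lt_trans hMlr.1 hz'M,
      lt_of_le_of_lt (min_le_right _ _) (by cases hMlr; linarith)⟩
    have hz'S : z' ∈ S := ⟨⟨le_trans hMmem.1 (le_of_lt hz'M), min_le_left _ _⟩,
      htrans hMS (hloc M z' hMlr hz'lr (le_of_lt hz'M))⟩
    exact absurd (le_csSup hbdd hz'S) (not_le.mpr hz'M)

/-- Part A: a locally increasing map out of the zebra cylinder that is constant on
the bottom circle is constant on the circle at some stripe level `d (2n+1)`. -/
lemma const_at_stripe (d : ℕ → ℝ) (hd : StrictAnti d) (hd01 : ∀ n, d n ∈ Set.Icc (0 : ℝ) 1)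
    (hinf : ⨅ n, d n = 0) {C : Type v'} (ℭ : Set (OSet C))
    (hpos : ∀ B' ∈ ℭ, B'.IsPoset) (hcover : ⋃₀ (OSet.carrier '' ℭ) = Set.univ)
    (g : Circle × unitInterval → C) (hg : LocIncr (zebraBasis d) ℭ g)
    (hc : ∀ s : Circle, g (s, 0) = g (1, 0)) :
    ∃ n : ℕ, ∀ s : Circle, g (s, ⟨d (2*n+1), hd01 _⟩) = g (1, ⟨d (2*n+1), hd01 _⟩) := by
  classical
  -- pick a basic B' around g (1,0)
  have h1 : g (1, 0) ∈ ⋃₀ (OSet.carrier '' ℭ) := hcover ▸ Set.mem_univ _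
  obtain ⟨t0, ⟨B', hB', rfl⟩, hmemB'⟩ := h1
  -- windows
  have win : ∀ θ : ℝ, ∃ ρ : ℝ, 0 < ρ ∧ ∃ δ : ℝ, 0 < δ ∧ ∀ t : unitInterval,
      (∃ k : ℕ, (t:ℝ) ∈ Set.Icc (d (2*k+1)) (d (2*k))) → (t:ℝ) < δ →
      ∀ x y : ℝ, |x - θ| < ρ → |y - θ| < ρ → x ≤ y →
        B'.le (g (Circle.exp x, t)) (g (Circle.exp y, t)) := by
    intro θ
    have hmem : g (Circle.exp θ, 0) ∈ B'.carrier := by rw [hc]; exact hmemB'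
    obtain ⟨B, hB, hxB, _hmap, hincr⟩ := hg (Circle.exp θ, 0) B' hB' hmem
    obtain ⟨a, b, hab1, hab2, O, hO, rfl⟩ := hB
    obtain ⟨hxB1, hxB2⟩ := hxB
    obtain ⟨xθ, hxθ, hexθ⟩ := hxB1
    obtain ⟨m, hm⟩ := Circle.exp_eq_exp.mp hexθ
    obtain ⟨ε, hε, hball⟩ := Metric.isOpen_iff.mp hO 0 hxB2
    refine ⟨min (xθ - a) (b - xθ), by cases hxθ; simp only [lt_min_iff]; constructor <;> linarith,
      ε, hε, ?_⟩
    intro t hstripe htδ x y hxw hyw hxy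
    have htO : t ∈ O := by
      apply hball
      rw [Metric.mem_ball, Subtype.dist_eq, Real.dist_eq]
      simpa [abs_of_nonneg t.2.1] using htδ
    have hw : ∀ w : ℝ, |w - θ| < min (xθ - a) (b - xθ) → w + m * (2 * Real.pi) ∈ Set.Ioo a b := by
      intro w hww
      rw [abs_lt] at hww
      have h1 := min_le_left (xθ - a) (b - xθ)
      have h2 := min_le_right (xθ - a) (b - xθ)
      constructor
      · have : -(xθ - a) < w - θ := by linarith [hww.1]
        linarith [hm]
      · have : w - θ < b - xθ := lt_of_lt_of_le hww.2 h2
        linarith [hm]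
    have hex : ∀ w : ℝ, Circle.exp (w + m * (2 * Real.pi)) = Circle.exp w :=
      fun w => Circle.exp_eq_exp.mpr ⟨m, rfl⟩
    have hle : (zebraOSet d a b O).le (Circle.exp x, t) (Circle.exp y, t) := by
      refine ⟨⟨⟨x + m * (2 * Real.pi), hw x hxw, hex x⟩, htO⟩,
        ⟨⟨y + m * (2 * Real.pi), hw y hyw, hex y⟩, htO⟩, rfl, Or.inr ⟨?_, Or.inr hstripe⟩⟩
      exact ⟨x + m * (2 * Real.pi), hw x hxw, y + m * (2 * Real.pi), hw y hyw,
        by linarith, hex x, hex y⟩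
    exact hincr _ _ hle
  -- extract window data
  choose ρ hρ δ hδ H using win
  -- compactness
  have hsub : Set.Icc (0:ℝ) (2*Real.pi) ⊆ ⋃ θ : ℝ, Set.Ioo (θ - ρ θ) (θ + ρ θ) := by
    intro z _
    exact Set.mem_iUnion.mpr ⟨z, by constructor <;> [linarith [hρ z]; linarith [hρ z]]⟩
  obtain ⟨F, hF⟩ := (isCompact_Icc).elim_finite_subcover _ (fun θ => isOpen_Ioo) hsub
  have h0mem : (0:ℝ) ∈ Set.Icc (0:ℝ) (2*Real.pi) := ⟨le_rfl, by positivity⟩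
  have hFne : F.Nonempty := by
    rcases Set.mem_iUnion₂.mp (hF h0mem) with ⟨θ, hθF, _⟩
    exact ⟨θ, hθF⟩
  set δs := F.inf' hFne δ with hδs
  have hδspos : 0 < δs := (Finset.lt_inf'_iff hFne).mpr (fun θ hθ => hδ θ)
  -- pick the stripe index
  have hlow : ∃ m : ℕ, d m < δs := by
    by_contra hcon
    push_neg at hcon
    have : δs ≤ ⨅ n, d n := le_ciInf hcon
    rw [hinf] at this; linarith
  obtain ⟨m0, hm0⟩ := hlow
  refine ⟨m0, ?_⟩
  set uu : unitInterval := ⟨d (2*m0+1), hd01 _⟩ with huu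
  have hstripe : ∃ k : ℕ, (uu:ℝ) ∈ Set.Icc (d (2*k+1)) (d (2*k)) :=
    ⟨m0, le_rfl, le_of_lt (hd (by omega))⟩
  have huδ : (uu:ℝ) < δs := by
    have h1 : d (2*m0+1) ≤ d m0 := hd.antitone (by omega)
    have h2 : d (2*m0+1) < d (2*m0) := hd (by omega)
    calc (uu:ℝ) ≤ d m0 := h1
    _ < δs := hm0
  -- chaining
  set G : ℝ → C := fun x => g (Circle.exp x, uu) with hG
  have hcov : ∀ z ∈ Set.Icc (0:ℝ) (2*Real.pi), ∃ l r : ℝ, z ∈ Set.Ioo l r ∧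
      ∀ x y, x ∈ Set.Ioo l r → y ∈ Set.Ioo l r → x ≤ y → B'.le (G x) (G y) := by
    intro z hz
    rcases Set.mem_iUnion₂.mp (hF hz) with ⟨θ, hθF, hzθ⟩
    refine ⟨θ - ρ θ, θ + ρ θ, hzθ, ?_⟩
    intro x y hx hy hxy
    have hδθ : δs ≤ δ θ := Finset.inf'_le _ hθF
    exact H θ uu hstripe (lt_of_lt_of_le huδ hδθ) x y
      (abs_lt.mpr ⟨by cases hx; linarith, by cases hx; linarith⟩)
      (abs_lt.mpr ⟨by cases hy; linarith, by cases hy; linarith⟩) hxy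
  obtain ⟨honly, _hrefl, hanti, htrans⟩ := hpos B' hB'
  have hchain := chain B'.le (fun {p q r} => htrans p q r) G hcov
  have hG2π : G (2*Real.pi) = G 0 := by
    have : Circle.exp (2*Real.pi) = Circle.exp 0 := Circle.exp_eq_exp.mpr ⟨1, by ring⟩
    simp only [hG, this]
  intro s
  obtain ⟨θ₀, hθ₀⟩ := (fun z => ⟨Complex.arg z, Circle.exp_arg z⟩ : Function.Surjective Circle.exp) s
  set θ := 2*Real.pi * Int.fract (θ₀ / (2*Real.pi)) with hθ
  have hpi : (0:ℝ) < 2*Real.pi := by positivity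
  have hθ1 : 0 ≤ θ := mul_nonneg (le_of_lt hpi) (Int.fract_nonneg _)
  have hθ2 : θ < 2*Real.pi := by
    have := Int.fract_lt_one (θ₀ / (2*Real.pi))
    calc θ < 2*Real.pi * 1 := by exact (mul_lt_mul_iff_right₀ hpi).mpr this
    _ = 2*Real.pi := by ring
  have hexθ : Circle.exp θ = Circle.exp θ₀ := by
    apply Circle.exp_eq_exp.mpr ⟨-⌊θ₀ / (2*Real.pi)⌋, ?_⟩
    rw [hθ, Int.fract]
    push_cast
    field_simp
    ring
  have hle1 : B'.le (G 0) (G θ) := hchain 0 θ le_rfl hθ1 (le_of_lt hθ2)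
  have hle2 : B'.le (G θ) (G 0) := hG2π ▸ hchain θ (2*Real.pi) hθ1 (le_of_lt hθ2) le_rfl
  have : G θ = G 0 := hanti _ _ hle2 hle1
  have h2 := this
  simp only [hG] at h2
  rw [hexθ, hθ₀, Circle.exp_zero] at h2
  exact h2

end Stmt17Aux
namespace Stmt17Aux

open Set TopologicalSpace

/-- The carrier of the test space: the zebra cylinder with the bottom tube collapsed
to the extra point `none` (plus harmless junk points). -/
def YC : Type u := ULift.{u} (Option (Circle × unitInterval))

/-- The basic neighbourhood of the collapsed point, with the trivial order. -/
def NOSet (u' : ℝ) : OSet YC where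
  carrier := {y | y.down = none ∨ ∃ p : Circle × unitInterval, y.down = some p ∧ (p.2:ℝ) < u'}
  le y y' := y = y' ∧ (y.down = none ∨ ∃ p : Circle × unitInterval, y.down = some p ∧ (p.2:ℝ) < u')

/-- Basic charts away from the collapsed point: pushforwards of zebra charts. -/
def AOSet (d : ℕ → ℝ) (a b : ℝ) (O : Set unitInterval) : OSet YC where
  carrier := {y | ∃ p : Circle × unitInterval, y.down = some p ∧ p ∈ (arcOSet a b).carrier ×ˢ O}
  le y y' := ∃ p q : Circle × unitInterval, y.down = some p ∧ y'.down = some q ∧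
    (zebraOSet d a b O).le p q

/-- The ordered basis of the test space. -/
def YB (d : ℕ → ℝ) (c u' : ℝ) : Set (OSet YC) :=
  insert (NOSet u') {B | ∃ a b : ℝ, 0 < b - a ∧ b - a < 2 * Real.pi ∧
    ∃ O : Set unitInterval, IsOpen O ∧ (∀ t ∈ O, c < (t:ℝ)) ∧ B = AOSet d a b O}

/-- The collapsing map. -/
noncomputable def fZ (c : ℝ) : Circle × unitInterval → YC :=
  fun p => ULift.up (if (p.2:ℝ) ≤ c then none else some p)

lemma zebra_le_imp {d : ℕ → ℝ} {a b a' b' : ℝ} {O O' : Set unitInterval}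
    (hsub : (arcOSet a' b').carrier ⊆ (arcOSet a b).carrier)
    (hle : ∀ p q, (arcOSet a' b').le p q → (arcOSet a b).le p q)
    (hO : O' ⊆ O) {p q : Circle × unitInterval} :
    (zebraOSet d a' b' O').le p q → (zebraOSet d a b O).le p q := by
  rintro ⟨⟨m1, m2⟩, ⟨m3, m4⟩, heq, hdisj⟩
  exact ⟨⟨hsub m1, hO m2⟩, ⟨hsub m3, hO m4⟩, heq,
    hdisj.imp id (fun h => ⟨hle _ _ h.1, h.2⟩)⟩

lemma zebra_antisymm {d : ℕ → ℝ} {a b : ℝ} {O : Set unitInterval}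
    (hab2 : b - a < 2 * Real.pi) {p q : Circle × unitInterval}
    (h1 : (zebraOSet d a b O).le p q) (h2 : (zebraOSet d a b O).le q p) : p = q := by
  obtain ⟨_, _, heq, hd1⟩ := h1
  obtain ⟨_, _, _, hd2⟩ := h2
  have h1' : p.1 = q.1 := by
    rcases hd1 with h | ⟨hl1, _⟩
    · exact h
    rcases hd2 with h | ⟨hl2, _⟩
    · exact h.symm
    exact arc_antisymm hab2 hl1 hl2
  exact Prod.ext h1' heq

lemma zebra_trans {d : ℕ → ℝ} {a b : ℝ} {O : Set unitInterval}
    (hab2 : b - a < 2 * Real.pi) {p q r : Circle × unitInterval}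
    (h1 : (zebraOSet d a b O).le p q) (h2 : (zebraOSet d a b O).le q r) :
    (zebraOSet d a b O).le p r := by
  obtain ⟨hm1, hm2, heq1, hd1⟩ := h1
  obtain ⟨hm2', hm3, heq2, hd2⟩ := h2
  refine ⟨hm1, hm3, heq1.trans heq2, ?_⟩
  rcases hd1 with h1' | ⟨hl1, hc1⟩
  · rcases hd2 with h2' | ⟨hl2, hc2⟩
    · exact Or.inl (h1'.trans h2')
    · refine Or.inr ⟨h1' ▸ hl2, ?_⟩
      rw [show ((p.2 : ℝ)) = ((q.2 : ℝ)) from congrArg _ heq1]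
      exact hc2
  · rcases hd2 with h2' | ⟨hl2, _⟩
    · exact Or.inr ⟨h2' ▸ hl1, hc1⟩
    · exact Or.inr ⟨arc_trans hab2 hl1 hl2, hc1⟩

lemma NOSet_isPoset (u' : ℝ) : (NOSet u').IsPoset := by
  refine ⟨?_, ?_, ?_, ?_⟩
  · rintro p q ⟨rfl, h⟩; exact ⟨h, h⟩
  · intro p hp; exact ⟨rfl, hp⟩
  · rintro p q ⟨rfl, -⟩ -; rfl
  · rintro p q r ⟨rfl, h⟩ ⟨rfl, -⟩; exact ⟨rfl, h⟩

lemma AOSet_isPoset {d : ℕ → ℝ} {a b : ℝ} (hab2 : b - a < 2 * Real.pi)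
    (O : Set unitInterval) : (AOSet d a b O).IsPoset := by
  refine ⟨?_, ?_, ?_, ?_⟩
  · rintro y y' ⟨p, q, hy, hy', hle⟩
    exact ⟨⟨p, hy, hle.1⟩, ⟨q, hy', hle.2.1⟩⟩
  · rintro y ⟨p, hy, hp⟩
    exact ⟨p, p, hy, hy, hp, hp, rfl, Or.inl rfl⟩
  · rintro y y' ⟨p, q, hy, hy', h1⟩ ⟨q', p', hy'2, hy2, h2⟩
    rw [hy'] at hy'2; rw [hy] at hy2
    have hqq : q' = q := (Option.some_injective _ hy'2).symm
    have hpp : p' = p := (Option.some_injective _ hy2).symm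
    rw [hqq, hpp] at h2
    have : p = q := zebra_antisymm hab2 h1 h2
    apply ULift.down_injective
    rw [hy, hy', this]
  · rintro y y' y'' ⟨p, q, hy, hy', h1⟩ ⟨q', r, hy'2, hy'', h2⟩
    rw [hy'] at hy'2
    have hqq : q' = q := (Option.some_injective _ hy'2).symm
    rw [hqq] at h2
    exact ⟨p, r, hy, hy'', zebra_trans hab2 h1 h2⟩

lemma isOpen_lt_coe (u' : ℝ) : IsOpen {t : unitInterval | (t:ℝ) < u'} :=
  isOpen_Iio.preimage continuous_subtype_val

lemma isOpen_coe_lt (c : ℝ) : IsOpen {t : unitInterval | c < (t:ℝ)} :=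
  isOpen_Ioi.preimage continuous_subtype_val

/-- Interpolation of charts in the test space. -/
lemma interpolate (d : ℕ → ℝ) {c u' : ℝ} (hc0 : 0 < c) (hcu : c < u')
    (hgap : ∀ t : unitInterval,
      ((t:ℝ) = 0 ∨ ∃ k : ℕ, (t:ℝ) ∈ Set.Icc (d (2*k+1)) (d (2*k))) → (t:ℝ) < u' → (t:ℝ) ≤ c) :
    ∀ x : YC, ∀ B1 ∈ YB d c u', ∀ B2 ∈ YB d c u', x ∈ B1.carrier → x ∈ B2.carrier →
      ∃ B3 ∈ YB d c u', x ∈ B3.carrier ∧ B3.carrier ⊆ B1.carrier ∩ B2.carrier ∧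
        ∀ p q, B3.le p q → B1.le p q ∧ B2.le p q := by
  -- key helper: the N-A interpolation
  have hNA : ∀ (a b : ℝ), 0 < b - a → b - a < 2 * Real.pi → ∀ O : Set unitInterval,
      IsOpen O → (∀ t ∈ O, c < (t:ℝ)) → ∀ x : YC,
      x ∈ (NOSet u').carrier → x ∈ (AOSet d a b O).carrier →
      ∃ B3 ∈ YB d c u', x ∈ B3.carrier ∧
        B3.carrier ⊆ (NOSet u').carrier ∩ (AOSet d a b O).carrier ∧
        ∀ p q, B3.le p q → (NOSet u').le p q ∧ (AOSet d a b O).le p q := by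
    intro a b hab1 hab2 O hO hOc x hxN hxA
    obtain ⟨p, hxp, hparc, hpO⟩ := hxA
    have hpu : (p.2:ℝ) < u' := by
      rcases hxN with h | ⟨p', hxp', hp'⟩
      · rw [hxp] at h; exact absurd h (by simp)
      · rw [hxp] at hxp'; obtain rfl : p' = p := Option.some_injective _ hxp'.symm; exact hp'
    set O3 : Set unitInterval := O ∩ {t | (t:ℝ) < u'} with hO3
    have hO3open : IsOpen O3 := hO.inter (isOpen_lt_coe u')
    refine ⟨AOSet d a b O3, Or.inr ⟨a, b, hab1, hab2, O3, hO3open,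
      fun t ht => hOc t ht.1, rfl⟩, ⟨p, hxp, hparc, hpO, hpu⟩, ?_, ?_⟩
    · rintro y ⟨q, hyq, hqarc, hqO, hqu⟩
      exact ⟨Or.inr ⟨q, hyq, hqu⟩, ⟨q, hyq, hqarc, hqO⟩⟩
    · rintro y y' ⟨p', q', hy, hy', hzle⟩
      constructor
      · -- N-order: points in the gap are only related when equal
        have heq2 : p'.2 = q'.2 := hzle.2.2.1
        have hp'c : c < (p'.2 : ℝ) := hOc _ hzle.1.2.1
        have hp'u : (p'.2 : ℝ) < u' := hzle.1.2.2
        have hpq : p' = q' := by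
          rcases hzle.2.2.2 with h | ⟨-, hcond⟩
          · exact Prod.ext h heq2
          · exfalso
            rcases hcond with h0 | hst
            · rw [h0] at hp'c; linarith
            · have := hgap p'.2 (Or.inr hst) hp'u
              linarith
        constructor
        · apply ULift.down_injective; rw [hy, hy', hpq]
        · exact Or.inr ⟨p', hy, hp'u⟩
      · exact ⟨p', q', hy, hy', zebra_le_imp (fun _ h => h) (fun _ _ h => h)
          (Set.inter_subset_left) hzle⟩
  intro x B1 hB1 B2 hB2 hx1 hx2
  rcases hB1 with rfl | ⟨a, b, hab1, hab2, O, hO, hOc, rfl⟩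
  · rcases hB2 with rfl | ⟨a, b, hab1, hab2, O, hO, hOc, rfl⟩
    · exact ⟨NOSet u', Or.inl rfl, hx1, fun y hy => ⟨hy, hy⟩, fun p q h => ⟨h, h⟩⟩
    · exact hNA a b hab1 hab2 O hO hOc x hx1 hx2
  · rcases hB2 with rfl | ⟨a', b', hab1', hab2', O', hO', hOc', rfl⟩
    · obtain ⟨B3, hB3, hxB3, hsub, hle⟩ := hNA a b hab1 hab2 O hO hOc x hx2 hx1
      exact ⟨B3, hB3, hxB3, fun y hy => ⟨(hsub hy).2, (hsub hy).1⟩,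
        fun p q h => ⟨(hle p q h).2, (hle p q h).1⟩⟩
    · -- two arc charts
      obtain ⟨p, hxp, hparc, hpO⟩ := hx1
      obtain ⟨p', hxp', hp'arc, hp'O⟩ := hx2
      rw [hxp] at hxp'
      have hpp : p' = p := Option.some_injective _ hxp'.symm
      rw [hpp] at hp'arc hp'O
      obtain ⟨a'', b'', h1'', h2'', hmem'', hsub'', hle''⟩ := arc_inter hab2 hparc hp'arc
      refine ⟨AOSet d a'' b'' (O ∩ O'), Or.inr ⟨a'', b'', h1'', h2'', O ∩ O', hO.inter hO',
        fun t ht => hOc t ht.1, rfl⟩, ⟨p, hxp, hmem'', hpO, hp'O⟩, ?_, ?_⟩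
      · rintro y ⟨q, hyq, hqarc, hqO, hqO'⟩
        exact ⟨⟨q, hyq, (hsub'' hqarc).1, hqO⟩, ⟨q, hyq, (hsub'' hqarc).2, hqO'⟩⟩
      · rintro y y' ⟨q, q', hy, hy', hzle⟩
        exact ⟨⟨q, q', hy, hy', zebra_le_imp (fun _ h => (hsub'' h).1)
            (fun _ _ h => (hle'' _ _ h).1) Set.inter_subset_left hzle⟩,
          ⟨q, q', hy, hy', zebra_le_imp (fun _ h => (hsub'' h).2)
            (fun _ _ h => (hle'' _ _ h).2) Set.inter_subset_right hzle⟩⟩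

end Stmt17Aux
namespace Stmt17Aux

open Set TopologicalSpace

lemma two_lt_two_pi : (2:ℝ) < 2 * Real.pi := by nlinarith [Real.pi_gt_three]

/-- Any point of the circle lies in a proper arc. -/
lemma mem_small_arc (s : Circle) :
    s ∈ (arcOSet ((s:ℂ).arg - 1) ((s:ℂ).arg + 1)).carrier :=
  ⟨(s:ℂ).arg, ⟨by linarith, by linarith⟩, Circle.exp_arg s⟩

lemma YB_isOrderedBasis (d : ℕ → ℝ) {c u' : ℝ} (hc0 : 0 < c) (hcu : c < u')
    (hgap : ∀ t : unitInterval,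
      ((t:ℝ) = 0 ∨ ∃ k : ℕ, (t:ℝ) ∈ Set.Icc (d (2*k+1)) (d (2*k))) → (t:ℝ) < u' → (t:ℝ) ≤ c) :
    @IsOrderedBasis YC (generateFrom (OSet.carrier '' YB d c u')) (YB d c u') := by
  have hinterp := interpolate d hc0 hcu hgap
  letI : TopologicalSpace YC := generateFrom (OSet.carrier '' YB d c u')
  refine ⟨?_, ?_, ?_⟩
  · rintro B (rfl | ⟨a, b, hab1, hab2, O, hO, hOc, rfl⟩)
    · exact NOSet_isPoset u'
    · exact AOSet_isPoset hab2 O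
  · refine ⟨?_, ?_, rfl⟩
    · rintro t1 ⟨B1, hB1, rfl⟩ t2 ⟨B2, hB2, rfl⟩ x ⟨hx1, hx2⟩
      obtain ⟨B3, hB3, hxB3, hsub, -⟩ := hinterp x B1 hB1 B2 hB2 hx1 hx2
      exact ⟨B3.carrier, ⟨B3, hB3, rfl⟩, hxB3, hsub⟩
    · apply Set.eq_univ_of_forall
      intro y
      rcases hy : y.down with - | p
      · exact ⟨(NOSet u').carrier, ⟨NOSet u', Or.inl rfl, rfl⟩, Or.inl hy⟩
      · by_cases hpu : (p.2:ℝ) < u'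
        · exact ⟨(NOSet u').carrier, ⟨NOSet u', Or.inl rfl, rfl⟩, Or.inr ⟨p, hy, hpu⟩⟩
        · push_neg at hpu
          refine ⟨(AOSet d ((p.1:ℂ).arg - 1) ((p.1:ℂ).arg + 1) {t | c < (t:ℝ)}).carrier,
            ⟨_, Or.inr ⟨_, _, by linarith, by linarith [Real.pi_gt_three],
              {t | c < (t:ℝ)}, isOpen_coe_lt c, fun t ht => ht, rfl⟩, rfl⟩,
            ⟨p, hy, mem_small_arc p.1, lt_of_lt_of_le hcu hpu⟩⟩
  · intro x B hB B' hB' hx hx'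
    obtain ⟨B3, hB3, hxB3, hsub, hle⟩ := hinterp x B hB B' hB' hx hx'
    exact ⟨B3, hB3, hxB3, hsub, hle⟩

lemma fZ_locIncr (d : ℕ → ℝ) {c u' : ℝ} (hc0 : 0 < c) (hcu : c < u')
    (hgap : ∀ t : unitInterval,
      ((t:ℝ) = 0 ∨ ∃ k : ℕ, (t:ℝ) ∈ Set.Icc (d (2*k+1)) (d (2*k))) → (t:ℝ) < u' → (t:ℝ) ≤ c) :
    LocIncr (zebraBasis d) (YB d c u') (fZ c) := by
  intro x B' hB'
  rcases hB' with rfl | ⟨a, b, hab1, hab2, O, hO, hOc, rfl⟩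
  · -- the chart around the collapsed point
    intro hmem
    have hx2u : ((x.2:ℝ)) < u' := by
      by_cases h : (x.2:ℝ) ≤ c
      · linarith
      · rcases hmem with hnone | ⟨p, hp, hpu⟩
        · simp only [fZ, if_neg h] at hnone
          exact absurd hnone (Option.some_ne_none _)
        · simp only [fZ, if_neg h] at hp
          obtain rfl : p = x := (Option.some_injective _ hp).symm
          exact hpu
    have hmap : ∀ p : Circle × unitInterval,
        p ∈ (zebraOSet d ((x.1:ℂ).arg - 1) ((x.1:ℂ).arg + 1) {t | (t:ℝ) < u'}).carrier →
        fZ c p ∈ (NOSet u').carrier := by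
      rintro p ⟨-, hp2⟩
      by_cases h : (p.2:ℝ) ≤ c
      · exact Or.inl (by simp [fZ, if_pos h])
      · exact Or.inr ⟨p, by simp [fZ, if_neg h], hp2⟩
    refine ⟨zebraOSet d ((x.1:ℂ).arg - 1) ((x.1:ℂ).arg + 1) {t | (t:ℝ) < u'},
      ⟨_, _, by linarith, by linarith [Real.pi_gt_three], {t | (t:ℝ) < u'},
        isOpen_lt_coe u', rfl⟩, ⟨mem_small_arc x.1, hx2u⟩, hmap, ?_⟩
    rintro p q ⟨⟨hp1, hp2⟩, ⟨hq1, hq2⟩, heq, hdisj⟩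
    refine ⟨?_, hmap p ⟨hp1, hp2⟩⟩
    by_cases h : (p.2:ℝ) ≤ c
    · have hq : (q.2:ℝ) ≤ c := by rw [← heq]; exact h
      simp only [fZ, if_pos h, if_pos hq]
      rfl
    · have hq : ¬ (q.2:ℝ) ≤ c := by rw [← heq]; exact h
      have hpq : p = q := by
        rcases hdisj with h1 | ⟨-, hcond⟩
        · exact Prod.ext h1 heq
        · exfalso
          apply h
          exact hgap p.2 (hcond.imp id id) hp2
      rw [hpq]
  · -- an arc chart
    intro hmem
    obtain ⟨p, hxp, hparc, hpO⟩ := hmem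
    have hxc : ¬ (x.2:ℝ) ≤ c := by
      intro h
      simp only [fZ, if_pos h] at hxp
      exact Option.some_ne_none _ hxp.symm
    simp only [fZ, if_neg hxc] at hxp
    obtain rfl : p = x := (Option.some_injective _ hxp).symm
    have hmap : ∀ p : Circle × unitInterval, p ∈ (zebraOSet d a b O).carrier →
        fZ c p ∈ (AOSet d a b O).carrier := by
      rintro q ⟨hq1, hq2⟩
      have : ¬ (q.2:ℝ) ≤ c := not_le.mpr (hOc _ hq2)
      exact ⟨q, by simp [fZ, if_neg this], hq1, hq2⟩
    refine ⟨zebraOSet d a b O, ⟨a, b, hab1, hab2, O, hO, rfl⟩, ⟨hparc, hpO⟩, hmap, ?_⟩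
    intro p q hle
    have hp : ¬ (p.2:ℝ) ≤ c := not_le.mpr (hOc _ hle.1.2)
    have hq : ¬ (q.2:ℝ) ≤ c := not_le.mpr (hOc _ hle.2.1.2)
    exact ⟨p, q, by simp [fZ, if_neg hp], by simp [fZ, if_neg hq], hle⟩

end Stmt17Aux
/-- The pair `i₀, c₀ : S¹ → Z` into the zebra cylinder has no
coequalizer in the category of locally ordered spaces. -/
theorem stmt17 (d : ℕ → ℝ) (hd : StrictAnti d) (hd01 : ∀ n, d n ∈ Set.Icc (0 : ℝ) 1)
    (hinf : ⨅ n, d n = 0) :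
    ¬ ∃ (C : LocOrdSpace.{u}) (g : Circle × unitInterval → C.carrier),
        IsCoeqIn (fun _ : LocOrdSpace.{u} => True) (zebraBasis d) C.basis
          (fun s : Circle => (s, (0 : unitInterval)))
          (fun _ : Circle => ((1 : Circle), (0 : unitInterval))) g := by
  rintro ⟨C, g, hgli, hgcoeq, huniv⟩
  have hdpos : ∀ m, 0 < d m := by
    intro m
    rcases lt_or_eq_of_le (hd01 m).1 with h | h
    · exact h
    · exfalso
      have h1 := hd (Nat.lt_succ_self m)
      have h2 := (hd01 (m+1)).1
      rw [← h] at h1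
      linarith
  letI : TopologicalSpace C.carrier := C.top
  have hconstbot : ∀ s : Circle, g (s, 0) = g (1, 0) := fun s => congrFun hgcoeq s
  obtain ⟨n, hconst⟩ := Stmt17Aux.const_at_stripe d hd hd01 hinf C.basis
    C.isBasis.isPoset C.isBasis.isBasis.sUnion_eq g hgli hconstbot
  have hcu : d (2*n+2) < d (2*n+1) := hd (by omega)
  have hgap : ∀ t : unitInterval,
      ((t:ℝ) = 0 ∨ ∃ k : ℕ, (t:ℝ) ∈ Set.Icc (d (2*k+1)) (d (2*k))) →
      (t:ℝ) < d (2*n+1) → (t:ℝ) ≤ d (2*n+2) := by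
    rintro t (h0 | ⟨k, hk1, hk2⟩) htu
    · rw [h0]; exact (hdpos _).le
    · by_cases hkn : k ≤ n
      · exfalso
        have : d (2*n+1) ≤ d (2*k+1) := hd.antitone (by omega)
        linarith
      · push_neg at hkn
        have : d (2*k) ≤ d (2*n+2) := hd.antitone (by omega)
        linarith
  set Y : LocOrdSpace.{u} := ⟨Stmt17Aux.YC,
    TopologicalSpace.generateFrom (OSet.carrier '' Stmt17Aux.YB d (d (2*n+2)) (d (2*n+1))),
    Stmt17Aux.YB d (d (2*n+2)) (d (2*n+1)),
    Stmt17Aux.YB_isOrderedBasis d (hdpos (2*n+2)) hcu hgap⟩ with hY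
  have hfli : LocIncr (zebraBasis d) Y.basis (Stmt17Aux.fZ (d (2*n+2))) :=
    Stmt17Aux.fZ_locIncr d (hdpos (2*n+2)) hcu hgap
  have hfcoeq : (Stmt17Aux.fZ (d (2*n+2))) ∘ (fun s : Circle => (s, (0:unitInterval))) =
      (Stmt17Aux.fZ (d (2*n+2))) ∘ (fun _ : Circle => ((1:Circle), (0:unitInterval))) := by
    funext s
    have h0c : ((0:unitInterval):ℝ) ≤ d (2*n+2) := by
      simp only [Set.Icc.coe_zero]
      exact (hdpos _).le
    simp only [Function.comp, Stmt17Aux.fZ, if_pos h0c]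
    rfl
  obtain ⟨h, ⟨hhli, hfact⟩, -⟩ := huniv Y trivial (Stmt17Aux.fZ (d (2*n+2))) hfli hfcoeq
  set uu : unitInterval := ⟨d (2*n+1), hd01 _⟩ with huu
  have h1 : Stmt17Aux.fZ (d (2*n+2)) (Circle.exp Real.pi, uu)
      = Stmt17Aux.fZ (d (2*n+2)) (1, uu) := by
    calc Stmt17Aux.fZ (d (2*n+2)) (Circle.exp Real.pi, uu)
        = (h ∘ g) (Circle.exp Real.pi, uu) := congrFun hfact _
      _ = (h ∘ g) (1, uu) := congrArg h (hconst (Circle.exp Real.pi))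
      _ = Stmt17Aux.fZ (d (2*n+2)) (1, uu) := (congrFun hfact _).symm
  have hnc : ¬ ((uu:ℝ) ≤ d (2*n+2)) := not_le.mpr hcu
  simp only [Stmt17Aux.fZ, if_neg hnc] at h1
  have h2 := congrArg (fun z => z.down) h1
  simp only [ULift.up_down] at h2
  have h3 : Circle.exp Real.pi = 1 := congrArg Prod.fst (Option.some_injective _ h2)
  have h4 : Circle.exp Real.pi = Circle.exp 0 := by rw [Circle.exp_zero]; exact h3
  obtain ⟨m, hm⟩ := Circle.exp_eq_exp.mp h4
  have hpi := Real.pi_pos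
  rcases le_or_gt m 0 with hm0 | hm0
  · have : (m:ℝ) ≤ 0 := by exact_mod_cast hm0
    nlinarith
  · have : (1:ℝ) ≤ (m:ℝ) := by exact_mod_cast hm0
    nlinarith
end
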